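/- arXiv:2311.00708 — 2 statements merged into one kernel-verified Lean document; each statement's English description precedes it below -/
import Mathlib

section
/- The functions φ_+ and φ_- satisfy, for every x ∈ ℝ, √(v₀/v₁) e^{-max(√v₀ x, √v₁ x)} ≤ φ_+(x) ≤ √(v₁/v₀) e^{-min(√v₀ x, √v₁ x)} and √(v₀/v₁) e^{min(√v₀ x, √v₁ x)} ≤ φ_-(x) ≤ √(v₁/v₀) e^{max(√v₀ x, √v₁ x)}. -/
open MeasureTheory Real Set Filter

noncomputable section

/-- `u ∈ H¹(ℝ)` with distributional derivative `u'`: `u` is (the continuous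
representative and is) continuous, `u, u' ∈ L²(ℝ)`, and `u` is a primitive of `u'`. -/
def MemH1 (u u' : ℝ → ℝ) : Prop :=
  Continuous u ∧ MemLp u 2 volume ∧ MemLp u' 2 volume ∧
    ∀ x : ℝ, u x = u 0 + ∫ t in (0:ℝ)..x, u' t

/-- The squared norm `‖u‖_V² = ∫ (|u'|² + V |u|²)`. -/
def IV (V u u' : ℝ → ℝ) : ℝ := ∫ x : ℝ, (u' x ^ 2 + V x * u x ^ 2)

/-- The sup norm `‖u‖_{L^∞(ℝ)}` of a (bounded continuous) function. -/
def supNorm (u : ℝ → ℝ) : ℝ := ⨆ x : ℝ, |u x|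

/-- Membership in `K_a = {u ∈ H¹(ℝ) : u(a) = ‖u‖_∞ = 1}` (with derivative datum `u'`). -/
def InK (a : ℝ) (u u' : ℝ → ℝ) : Prop :=
  MemH1 u u' ∧ u a = 1 ∧ ∀ x : ℝ, |u x| ≤ 1

/-- `F(a) = inf_{u ∈ K_a} ‖u‖_V²`. -/
def FV (V : ℝ → ℝ) (a : ℝ) : ℝ :=
  sInf { r : ℝ | ∃ u u' : ℝ → ℝ, InK a u u' ∧ r = IV V u u' }

/-- `m(V) = inf { ‖u‖_V²/‖u‖_∞² : u ∈ H¹(ℝ), u ≢ 0 }`. -/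
def mV (V : ℝ → ℝ) : ℝ :=
  sInf { r : ℝ | ∃ u u' : ℝ → ℝ, MemH1 u u' ∧ u ≠ 0 ∧ r = IV V u u' / supNorm u ^ 2 }

/-- `u` (with derivative datum `u'`) minimizes `‖·‖_V²` over `K_a`. -/
def IsMinimizer (V : ℝ → ℝ) (a : ℝ) (u u' : ℝ → ℝ) : Prop :=
  InK a u u' ∧ ∀ v v' : ℝ → ℝ, InK a v v' → IV V u u' ≤ IV V v v'

/-- `φ` is a `W^{2,∞}_loc` solution of `φ'' = Vφ` with `φ(0) = 1` and `φ(x) → 0` as `x → +∞`: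
`φ` is differentiable with locally Lipschitz derivative and `(φ')' = Vφ` a.e. -/
def SolP (V φ : ℝ → ℝ) : Prop :=
  (∀ x : ℝ, DifferentiableAt ℝ φ x) ∧ LocallyLipschitz (deriv φ) ∧
    (∀ᵐ x : ℝ ∂volume, HasDerivAt (deriv φ) (V x * φ x) x) ∧
    φ 0 = 1 ∧ Tendsto φ atTop (nhds 0)

/-- `φ` is a `W^{2,∞}_loc` solution of `φ'' = Vφ` with `φ(0) = 1` and `φ(x) → 0` as `x → −∞`. -/
def SolM (V φ : ℝ → ℝ) : Prop :=
  (∀ x : ℝ, DifferentiableAt ℝ φ x) ∧ LocallyLipschitz (deriv φ) ∧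
    (∀ᵐ x : ℝ ∂volume, HasDerivAt (deriv φ) (V x * φ x) x) ∧
    φ 0 = 1 ∧ Tendsto φ atBot (nhds 0)


lemma diffquot_bound {f : ℝ → ℝ} (hf : LocallyLipschitz f) (a b : ℝ) :
    ∃ K : ℝ, 0 ≤ K ∧ ∃ ε : ℝ, 0 < ε ∧
      ∀ x ∈ Set.Icc a b, ∀ h : ℝ, |h| ≤ ε → |f (x + h) - f x| ≤ K * |h| := by
  have h1 : ∀ x : ℝ, ∃ p : NNReal × ℝ, 0 < p.2 ∧ LipschitzOnWith p.1 f (Metric.ball x p.2) := by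
    intro x
    obtain ⟨K, t, ht, hK⟩ := hf x
    obtain ⟨r, hr, hball⟩ := Metric.mem_nhds_iff.1 ht
    exact ⟨(K, r), hr, hK.mono hball⟩
  choose p hp1 hp2 using h1
  obtain ⟨t, -, hcov⟩ := (isCompact_Icc (a := a) (b := b)).elim_nhds_subcover
      (fun x => Metric.ball x ((p x).2 / 2))
      (fun x _ => Metric.ball_mem_nhds x (by linarith [hp1 x]))
  rcases t.eq_empty_or_nonempty with h | hne
  · exact ⟨0, le_refl _, 1, one_pos, fun x hx => absurd (hcov hx) (by simp [h])⟩
  · refine ⟨(t.sup fun i => (p i).1 : NNReal), NNReal.coe_nonneg _,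
      t.inf' hne (fun i => (p i).2 / 2), ?_, ?_⟩
    · rw [Finset.lt_inf'_iff]
      exact fun i _ => by linarith [hp1 i]
    · intro x hx h hh
      have := hcov hx
      simp only [Set.mem_iUnion] at this
      obtain ⟨i, hi, hxi⟩ := this
      have hpi := hp1 i
      have hx1 : x ∈ Metric.ball i (p i).2 := by
        rw [Metric.mem_ball] at hxi ⊢; linarith
      have hx2 : x + h ∈ Metric.ball i (p i).2 := by
        rw [Metric.mem_ball, Real.dist_eq] at hxi ⊢
        have hε : t.inf' hne (fun i => (p i).2 / 2) ≤ (p i).2 / 2 :=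
          Finset.inf'_le _ hi
        calc |x + h - i| ≤ |h| + |x - i| := by
              have := abs_add_le h (x - i); rw [show x + h - i = h + (x - i) by ring]; linarith
          _ < (p i).2 := by linarith
      have hd := (hp2 i).dist_le_mul (x + h) hx2 x hx1
      rw [Real.dist_eq, Real.dist_eq, add_sub_cancel_left] at hd
      calc |f (x + h) - f x| ≤ ((p i).1 : ℝ) * |h| := hd
        _ ≤ _ := by
            apply mul_le_mul_of_nonneg_right _ (abs_nonneg h)
            exact NNReal.coe_le_coe.2 (Finset.le_sup (f := fun i => (p i).1) hi)

lemma ftc_lip {f g : ℝ → ℝ} (hf : LocallyLipschitz f)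
    (hg : AEStronglyMeasurable g volume)
    (hd : ∀ᵐ x : ℝ ∂volume, HasDerivAt f (g x) x) {a b : ℝ} (hab : a ≤ b) :
    f b - f a = ∫ t in a..b, g t := by
  have hfc : Continuous f := hf.continuous
  set δ : ℕ → ℝ := fun n => (1:ℝ) / (n+1) with hδdef
  have hδpos : ∀ n, 0 < δ n := fun n => by positivity
  have hδ0 : Tendsto δ atTop (nhds 0) := tendsto_one_div_add_atTop_nhds_zero_nat
  set F : ℕ → ℝ → ℝ := fun n x => (f (x + δ n) - f x) / δ n with hFdef
  have hseq : ∀ x : ℝ, Tendsto (fun n => x + δ n) atTop (nhdsWithin x {x}ᶜ) := by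
    intro x
    apply tendsto_nhdsWithin_of_tendsto_nhds_of_eventually_within
    · simpa using tendsto_const_nhds.add hδ0
    · filter_upwards with n
      simp only [Set.mem_compl_iff, Set.mem_singleton_iff]
      intro hcon
      nlinarith [hδpos n, congrArg (fun y => y - x) hcon]
  have hslope : ∀ (x : ℝ) (c : ℝ → ℝ) (n : ℕ), slope c x (x + δ n) = (c (x + δ n) - c x) / δ n := by
    intro x c n
    rw [slope_def_field, add_sub_cancel_left]
  have hlim : ∀ᵐ x : ℝ ∂(volume.restrict (Set.Ioc a b)),
      Tendsto (fun n => F n x) atTop (nhds (g x)) := by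
    refine ae_restrict_of_ae (hd.mono fun x hx => ?_)
    have h1 := (hasDerivAt_iff_tendsto_slope.1 hx).comp (hseq x)
    convert h1 using 2 with n
    rw [Function.comp_apply, hslope]
  obtain ⟨K, hK0, ε, hε, hKb⟩ := diffquot_bound hf a b
  have hbound : ∀ᶠ n in atTop, ∀ᵐ x ∂(volume.restrict (Set.Ioc a b)), ‖F n x‖ ≤ K := by
    have hev : ∀ᶠ n in atTop, δ n < ε := hδ0.eventually (gt_mem_nhds hε)
    filter_upwards [hev] with n hn
    refine (ae_restrict_mem measurableSet_Ioc).mono fun x hx => ?_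
    have hb := hKb x (Set.Ioc_subset_Icc_self hx) (δ n)
      (by rw [abs_of_pos (hδpos n)]; exact hn.le)
    rw [abs_of_pos (hδpos n)] at hb
    rw [Real.norm_eq_abs, hFdef]
    rw [abs_div, abs_of_pos (hδpos n), div_le_iff₀ (hδpos n)]
    exact hb
  have hmeasF : ∀ᶠ n in atTop,
      AEStronglyMeasurable (F n) (volume.restrict (Set.Ioc a b)) :=
    Filter.Eventually.of_forall fun n =>
      (((hfc.comp (continuous_id.add continuous_const)).sub hfc).div_const _).aestronglyMeasurable
  have hKint : Integrable (fun _ : ℝ => K) (volume.restrict (Set.Ioc a b)) := by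
    exact integrableOn_const measure_Ioc_lt_top.ne
  have hDCT := tendsto_integral_filter_of_dominated_convergence (fun _ => K)
    hmeasF hbound hKint hlim
  -- compute the integrals of F n
  have hFint : ∀ n : ℕ, ∫ x, F n x ∂(volume.restrict (Set.Ioc a b)) =
      (∫ x in b..(b + δ n), f x) / δ n - (∫ x in a..(a + δ n), f x) / δ n := by
    intro n
    have hIcont : ∀ c d : ℝ, IntervalIntegrable f volume c d := fun c d =>
      hfc.intervalIntegrable c d
    have e1 : ∫ x, F n x ∂(volume.restrict (Set.Ioc a b)) = ∫ x in a..b, F n x := by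
      rw [intervalIntegral.integral_of_le hab]
    rw [e1, hFdef]
    have e2 : ∫ x in a..b, (f (x + δ n) - f x) / δ n
        = ((∫ x in a..b, f (x + δ n)) - ∫ x in a..b, f x) / δ n := by
      have hshift : IntervalIntegrable (fun x => f (x + δ n)) volume a b :=
        (hfc.comp (continuous_id.add continuous_const)).intervalIntegrable _ _
      simp only [div_eq_inv_mul]
      rw [intervalIntegral.integral_const_mul, intervalIntegral.integral_sub hshift (hIcont a b)]
    rw [e2, intervalIntegral.integral_comp_add_right]
    have c1 : (∫ x in a..(a + δ n), f x) + ∫ x in (a + δ n)..(b + δ n), f x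
        = ∫ x in a..(b + δ n), f x :=
      intervalIntegral.integral_add_adjacent_intervals (hIcont _ _) (hIcont _ _)
    have c2 : (∫ x in a..b, f x) + ∫ x in b..(b + δ n), f x = ∫ x in a..(b + δ n), f x :=
      intervalIntegral.integral_add_adjacent_intervals (hIcont _ _) (hIcont _ _)
    rw [div_sub_div_same]
    congr 1
    linarith
  have hGlim : ∀ c : ℝ, Tendsto (fun n => (∫ x in c..(c + δ n), f x) / δ n) atTop (nhds (f c)) := by
    intro c
    have hG : HasDerivAt (fun y => ∫ x in c..y, f x) (f c) c :=
      intervalIntegral.integral_hasDerivAt_right (hfc.intervalIntegrable c c)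
        (hfc.stronglyMeasurableAtFilter _ _) hfc.continuousAt
    have h1 := (hasDerivAt_iff_tendsto_slope.1 hG).comp (hseq c)
    convert h1 using 2 with n
    rw [Function.comp_apply, hslope]
    rw [intervalIntegral.integral_same, sub_zero]
  have h2 : Tendsto (fun n => ∫ x, F n x ∂(volume.restrict (Set.Ioc a b))) atTop
      (nhds (f b - f a)) := by
    simp only [hFint]
    exact (hGlim b).sub (hGlim a)
  have := tendsto_nhds_unique h2 hDCT
  rw [this, intervalIntegral.integral_of_le hab]

set_option maxHeartbeats 2000000 in
lemma main_bound {V φ ψ : ℝ → ℝ} {v0 v1 : ℝ} (hmeas : Measurable V) (h0 : 0 < v0)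
    (h01 : v0 ≤ v1) (hbd : ∀ᵐ x : ℝ ∂volume, v0 ≤ V x ∧ V x ≤ v1)
    (hdiff : ∀ x, HasDerivAt φ (ψ x) x) (hlip : LocallyLipschitz ψ)
    (hode : ∀ᵐ x : ℝ ∂volume, HasDerivAt ψ (V x * φ x) x)
    (hφ0 : φ 0 = 1) (hlim : Tendsto φ atTop (nhds 0)) :
    ∀ x : ℝ, Real.exp (-(max (Real.sqrt v0 * x) (Real.sqrt v1 * x))) ≤ φ x ∧
      φ x ≤ Real.exp (-(min (Real.sqrt v0 * x) (Real.sqrt v1 * x))) := by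
  have hv1 : 0 < v1 := lt_of_lt_of_le h0 h01
  have hφc : Continuous φ := by
    rw [continuous_iff_continuousAt]; exact fun x => (hdiff x).continuousAt
  have hψc : Continuous ψ := hlip.continuous
  have hgmeas : AEStronglyMeasurable (fun t => V t * φ t) volume :=
    (hmeas.mul hφc.measurable).aestronglyMeasurable
  have hFTC1 : ∀ a b : ℝ, ∫ t in a..b, ψ t = φ b - φ a := fun a b =>
    intervalIntegral.integral_eq_sub_of_hasDerivAt (fun t _ => hdiff t)
      (hψc.intervalIntegrable _ _)
  have hFTC2 : ∀ a b : ℝ, a ≤ b → ψ b - ψ a = ∫ t in a..b, V t * φ t := fun a b hab =>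
    ftc_lip hlip hgmeas hode hab
  have hIntVφ : ∀ a b : ℝ, IntervalIntegrable (fun t => V t * φ t) volume a b := by
    intro a b
    rw [intervalIntegrable_iff]
    apply Integrable.mono ((continuous_const.mul hφc.abs).integrableOn_uIoc (μ := volume))
      (hgmeas.restrict)
    refine ae_restrict_of_ae (hbd.mono fun t ht => ?_)
    have h1 : 0 ≤ V t := le_trans h0.le ht.1
    have h2 : 0 ≤ v1 := hv1.le
    simp only [Real.norm_eq_abs, Pi.mul_apply, abs_mul, abs_abs]
    rw [abs_of_nonneg h1, abs_of_nonneg h2]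
    exact mul_le_mul_of_nonneg_right ht.2 (abs_nonneg _)
  have psi_mono : ∀ a b : ℝ, a ≤ b → (∀ t ∈ Icc a b, 0 ≤ φ t) → ψ a ≤ ψ b := by
    intro a b hab hnn
    have h := hFTC2 a b hab
    have : 0 ≤ ∫ t in a..b, V t * φ t := by
      rw [intervalIntegral.integral_of_le hab]
      apply integral_nonneg_of_ae
      filter_upwards [ae_restrict_of_ae hbd, ae_restrict_mem measurableSet_Ioc] with t ht hmem
      exact mul_nonneg (le_trans h0.le ht.1) (hnn t (Ioc_subset_Icc_self hmem))
    linarith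
  have psi_anti : ∀ a b : ℝ, a ≤ b → (∀ t ∈ Icc a b, φ t ≤ 0) → ψ b ≤ ψ a := by
    intro a b hab hnp
    have h := hFTC2 a b hab
    have : (∫ t in a..b, V t * φ t) ≤ 0 := by
      rw [intervalIntegral.integral_of_le hab]
      apply integral_nonpos_of_ae
      filter_upwards [ae_restrict_of_ae hbd, ae_restrict_mem measurableSet_Ioc] with t ht hmem
      exact mul_nonpos_of_nonneg_of_nonpos (le_trans h0.le ht.1)
        (hnp t (Ioc_subset_Icc_self hmem))
    linarith
  -- step 1 : φ > 0 on [0,∞)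
  have step1 : ∀ x : ℝ, 0 ≤ x → 0 < φ x := by
    intro x₀ hx₀
    by_contra hcon
    push_neg at hcon
    set S : Set ℝ := {x | 0 ≤ x} ∩ {x | φ x ≤ 0} with hSdef
    have hSne : S.Nonempty := ⟨x₀, hx₀, hcon⟩
    have hSclosed : IsClosed S :=
      (isClosed_le continuous_const continuous_id).inter (isClosed_le hφc continuous_const)
    have hSbdd : BddBelow S := ⟨0, fun y hy => hy.1⟩
    set a := sInf S with hadef
    have haS : a ∈ S := hSclosed.csInf_mem hSne hSbdd
    have ha0 : 0 ≤ a := haS.1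
    have haφ : φ a ≤ 0 := haS.2
    have hapos : 0 < a := by
      rcases eq_or_lt_of_le ha0 with h | h
      · exfalso; rw [← h, hφ0] at haφ; linarith
      · exact h
    have hlt : ∀ t : ℝ, 0 ≤ t → t < a → 0 < φ t := by
      intro t ht hta
      by_contra hc
      push_neg at hc
      exact absurd (csInf_le hSbdd (⟨ht, hc⟩ : t ∈ S)) (not_le.2 hta)
    have hφa : φ a = 0 := by
      refine le_antisymm haφ ?_
      by_contra hc
      push_neg at hc
      have h2 : ∀ᶠ y in nhds a, φ y < 0 := (hφc.tendsto a).eventually (Iio_mem_nhds hc)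
      have h3 : ∀ᶠ y in nhds a, 0 < y := Ioi_mem_nhds hapos
      have h4 : ∀ᶠ y in nhdsWithin a (Iio a), φ y < 0 ∧ 0 < y :=
        (h2.and h3).filter_mono nhdsWithin_le_nhds
      obtain ⟨y, ⟨hy1, hy2⟩, hy3⟩ := (h4.and self_mem_nhdsWithin).exists
      exact absurd (hlt y hy2.le hy3) (by linarith)
    -- ψ a ≤ 0
    have hψa_le : ψ a ≤ 0 := by
      have hs := hasDerivAt_iff_tendsto_slope.1 (hdiff a)
      have hs2 : Tendsto (slope φ a) (nhdsWithin a (Iio a)) (nhds (ψ a)) :=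
        hs.mono_left (nhdsWithin_mono a (fun y hy => ne_of_lt hy))
      refine le_of_tendsto hs2 ?_
      have h3' : ∀ᶠ y in nhds a, 0 < y := Ioi_mem_nhds hapos
      have h3 : ∀ᶠ y in nhdsWithin a (Iio a), 0 < y := h3'.filter_mono nhdsWithin_le_nhds
      filter_upwards [h3, self_mem_nhdsWithin] with y hy1 hy2
      rw [slope_def_field, hφa, sub_zero]
      apply div_nonpos_of_nonneg_of_nonpos (hlt y hy1.le hy2).le
      simp only [mem_Iio] at hy2; linarith
    rcases eq_or_lt_of_le hψa_le with hψa0 | hψaneg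
    · -- subcase ψ a = 0 : use Gronwall-style exponential trick
      have hφnn : ∀ t ∈ Icc 0 a, 0 ≤ φ t := by
        intro t ⟨ht1, ht2⟩
        rcases eq_or_lt_of_le ht2 with h | h
        · rw [h, hφa]
        · exact (hlt t ht1 h).le
      have hψle0 : ∀ t ∈ Icc 0 a, ψ t ≤ 0 := by
        intro t ht
        have := psi_mono t a ht.2 (fun u hu => hφnn u ⟨le_trans ht.1 hu.1, hu.2⟩)
        rw [← hψa0]; linarith
      have hφanti : AntitoneOn φ (Icc 0 a) := by
        apply antitoneOn_of_deriv_nonpos (convex_Icc 0 a) hφc.continuousOn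
        · exact fun t _ => (hdiff t).differentiableAt.differentiableWithinAt
        · intro t ht
          rw [interior_Icc] at ht
          rw [(hdiff t).deriv]
          exact hψle0 t (Ioo_subset_Icc_self ht)
      have hψlb : ∀ x ∈ Icc 0 a, -(v1 * a * φ x) ≤ ψ x := by
        intro x hx
        have h1 : ψ a - ψ x = ∫ t in x..a, V t * φ t := hFTC2 x a hx.2
        have h2 : (∫ t in x..a, V t * φ t) ≤ ∫ t in x..a, v1 * φ x := by
          apply intervalIntegral.integral_mono_ae_restrict hx.2 (hIntVφ x a)
            intervalIntegrable_const
          filter_upwards [ae_restrict_of_ae hbd, ae_restrict_mem measurableSet_Icc]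
            with t ht hmem
          have hφt : 0 ≤ φ t := hφnn t ⟨le_trans hx.1 hmem.1, hmem.2⟩
          have hφtx : φ t ≤ φ x := hφanti hx ⟨le_trans hx.1 hmem.1, hmem.2⟩ hmem.1
          nlinarith [ht.1, ht.2, le_trans h0.le ht.1]
        rw [intervalIntegral.integral_const, smul_eq_mul] at h2
        have hφx : 0 ≤ φ x := hφnn x hx
        have h3 : -ψ x ≤ (a - x) * (v1 * φ x) := by
          rw [hψa0] at h1; simp only [zero_sub] at h1; linarith
        nlinarith [hx.1, hx.2, mul_nonneg (mul_nonneg hv1.le hφx) hx.1]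
      -- monotone of φ x * exp (v1 * a * x) on [0,a]
      set c := v1 * a with hcdef
      have hc : 0 < c := mul_pos hv1 hapos
      have hAder : ∀ x : ℝ, HasDerivAt (fun y => φ y * Real.exp (c * y))
          ((ψ x + c * φ x) * Real.exp (c * x)) x := by
        intro x
        have h1 : HasDerivAt (fun y : ℝ => c * y) c x := by
          simpa using (hasDerivAt_id x).const_mul c
        have h2 : HasDerivAt (fun y => Real.exp (c * y)) (Real.exp (c * x) * c) x := by
          simpa [Function.comp_def] using (Real.hasDerivAt_exp (c * x)).comp x h1
        have h3 := (hdiff x).fun_mul h2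
        exact h3.congr_deriv (by ring)
      have hmono : MonotoneOn (fun y => φ y * Real.exp (c * y)) (Icc 0 a) := by
        have hcont : Continuous (fun y : ℝ => φ y * Real.exp (c * y)) := by fun_prop
        apply monotoneOn_of_deriv_nonneg (convex_Icc 0 a) hcont.continuousOn
        · exact fun t _ => (hAder t).differentiableAt.differentiableWithinAt
        · intro t ht
          rw [interior_Icc] at ht
          rw [(hAder t).deriv]
          have := hψlb t (Ioo_subset_Icc_self ht)
          have := Real.exp_pos (c * t)
          nlinarith
      have := hmono (left_mem_Icc.2 ha0) (right_mem_Icc.2 ha0) ha0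
      simp only [hφ0, hφa, mul_zero, zero_mul, one_mul, Real.exp_zero] at this
      linarith
    · -- subcase ψ a < 0
      set c := ψ a with hcdef
      have hccont : ∀ᶠ t in nhds a, ψ t < c / 2 :=
        (hψc.tendsto a).eventually (Iio_mem_nhds (by linarith))
      obtain ⟨δ, hδpos, hδ⟩ := Metric.eventually_nhds_iff.1 hccont
      have hneg1 : ∀ x, a < x → x ≤ a + δ / 2 → φ x ≤ c / 2 * (x - a) := by
        intro x hax hxδ
        have h1 : ∫ t in a..x, ψ t = φ x - φ a := hFTC1 a x
        have h2 : (∫ t in a..x, ψ t) ≤ ∫ t in a..x, c / 2 := by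
          apply intervalIntegral.integral_mono_on hax.le (hψc.intervalIntegrable _ _)
            intervalIntegrable_const
          intro t ht
          apply le_of_lt
          apply hδ
          rw [Real.dist_eq, abs_of_nonneg (by linarith [ht.1])]
          linarith [ht.2]
        rw [intervalIntegral.integral_const] at h2
        rw [h1, hφa] at h2
        rw [smul_eq_mul] at h2
        linarith [h2]
      have hneg : ∀ x, a < x → φ x < 0 := by
        intro x₁ hax₁
        by_contra hc1
        push_neg at hc1
        have hx₁far : a + δ / 2 < x₁ := by
          by_contra hc2
          push_neg at hc2
          have := hneg1 x₁ hax₁ hc2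
          nlinarith
        set T : Set ℝ := {t | a + δ / 2 ≤ t ∧ t ≤ x₁ ∧ 0 ≤ φ t} with hTdef
        have hTne : T.Nonempty := ⟨x₁, hx₁far.le, le_refl _, hc1⟩
        have hTclosed : IsClosed T := by
          have : T = (Icc (a + δ/2) x₁) ∩ {t | 0 ≤ φ t} := by
            ext t; simp [hTdef, Set.mem_Icc, and_assoc]
          rw [this]
          exact isClosed_Icc.inter (isClosed_le continuous_const hφc)
        have hTbdd : BddBelow T := ⟨a + δ/2, fun y hy => hy.1⟩
        set b := sInf T with hbdef
        have hbT : b ∈ T := hTclosed.csInf_mem hTne hTbdd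
        obtain ⟨hb1, hb2, hb3⟩ := hbT
        have hab : a < b := by linarith
        have hφneg_on : ∀ t, a < t → t < b → φ t < 0 := by
          intro t hat htb
          rcases le_or_gt t (a + δ/2) with h | h
          · have := hneg1 t hat h; nlinarith
          · by_contra hc2
            push_neg at hc2
            have : t ∈ T := ⟨h.le, by linarith, hc2⟩
            exact absurd (csInf_le hTbdd this) (not_le.2 htb)
        have hφb : φ b = 0 := by
          refine le_antisymm ?_ hb3
          by_contra hc2
          push_neg at hc2
          have h2 : ∀ᶠ y in nhds b, 0 < φ y := (hφc.tendsto b).eventually (Ioi_mem_nhds hc2)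
          have h3 : ∀ᶠ y in nhds b, a < y := Ioi_mem_nhds hab
          have h4 := (h2.and h3).filter_mono (nhdsWithin_le_nhds (s := Iio b))
          obtain ⟨y, ⟨hy1, hy2⟩, hy3⟩ := (h4.and self_mem_nhdsWithin).exists
          exact absurd (hφneg_on y hy2 hy3) (by linarith)
        have hφle_on : ∀ t ∈ Icc a b, φ t ≤ 0 := by
          intro t ⟨ht1, ht2⟩
          rcases eq_or_lt_of_le ht1 with h | h
          · rw [← h, hφa]
          · rcases eq_or_lt_of_le ht2 with h2 | h2
            · rw [h2, hφb]
            · exact (hφneg_on t h h2).le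
        have hψle : ∀ t ∈ Icc a b, ψ t ≤ c := by
          intro t ht
          have := psi_anti a t ht.1 (fun u hu => hφle_on u ⟨hu.1, le_trans hu.2 ht.2⟩)
          linarith
        have h1 : ∫ t in a..b, ψ t = φ b - φ a := hFTC1 a b
        have h2 : (∫ t in a..b, ψ t) ≤ ∫ t in a..b, c :=
          intervalIntegral.integral_mono_on hab.le (hψc.intervalIntegrable _ _)
            intervalIntegrable_const hψle
        rw [intervalIntegral.integral_const, smul_eq_mul] at h2
        rw [h1, hφa, hφb] at h2
        nlinarith
      have hφle_all : ∀ x, a ≤ x → φ x ≤ 0 := by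
        intro x hx
        rcases eq_or_lt_of_le hx with h | h
        · rw [← h, hφa]
        · exact (hneg x h).le
      have hψle : ∀ x, a ≤ x → ψ x ≤ c := by
        intro x hx
        have := psi_anti a x hx (fun u hu => hφle_all u hu.1)
        linarith
      have hlin : ∀ x, a ≤ x → φ x ≤ c * (x - a) := by
        intro x hx
        have h1 : ∫ t in a..x, ψ t = φ x - φ a := hFTC1 a x
        have h2 : (∫ t in a..x, ψ t) ≤ ∫ t in a..x, c :=
          intervalIntegral.integral_mono_on hx (hψc.intervalIntegrable _ _)
            intervalIntegrable_const (fun t ht => hψle t ht.1)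
        rw [intervalIntegral.integral_const, smul_eq_mul] at h2
        rw [h1, hφa] at h2
        linarith
      have h1 : ∀ᶠ x in atTop, -1 < φ x := hlim.eventually (Ioi_mem_nhds (by norm_num))
      have h2 : ∀ᶠ x in atTop, a + 2 / (-c) ≤ x := eventually_ge_atTop _
      obtain ⟨x, hx1, hx2⟩ := (h1.and h2).exists
      have hcneg : c < 0 := hψaneg
      have h3 : φ x ≤ c * (x - a) := hlin x (by nlinarith [div_pos two_pos (neg_pos.2 hcneg)])
      have h4 : c * (x - a) ≤ c * (2 / (-c)) := by
        apply mul_le_mul_of_nonpos_left _ hcneg.le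
        linarith
      have hcne : c ≠ 0 := ne_of_lt hcneg
      have h5 : c * (2 / (-c)) = -2 := by
        rw [div_neg, mul_neg, mul_div_assoc', mul_comm, mul_div_assoc, div_self hcne, mul_one]
      linarith
  -- step 2 : ψ < 0 on [0,∞)
  have step2 : ∀ x : ℝ, 0 ≤ x → ψ x < 0 := by
    intro x₀ hx₀
    by_contra hc
    push_neg at hc
    have hψnn : ∀ t, x₀ ≤ t → 0 ≤ ψ t := by
      intro t ht
      have := psi_mono x₀ t ht (fun u hu => (step1 u (le_trans hx₀ hu.1)).le)
      linarith
    have hφm : ∀ t, x₀ ≤ t → φ x₀ ≤ φ t := by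
      intro t ht
      have h1 : ∫ s in x₀..t, ψ s = φ t - φ x₀ := hFTC1 x₀ t
      have h2 : 0 ≤ ∫ s in x₀..t, ψ s :=
        intervalIntegral.integral_nonneg ht (fun u hu => hψnn u hu.1)
      linarith
    have h1 : ∀ᶠ x in atTop, φ x < φ x₀ :=
      hlim.eventually (Iio_mem_nhds (step1 x₀ hx₀))
    obtain ⟨x, hx1, hx2⟩ := (h1.and (eventually_ge_atTop x₀)).exists
    exact absurd (hφm x hx2) (not_le.2 hx1)
  -- step 3 : φ > 0 on (-∞,0)
  have step3 : ∀ x : ℝ, x < 0 → 0 < φ x := by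
    intro x₀ hx₀
    by_contra hcon
    push_neg at hcon
    set S' : Set ℝ := {x | φ x ≤ 0} ∩ Iic 0 with hS'def
    have hSne : S'.Nonempty := ⟨x₀, hcon, hx₀.le⟩
    have hSclosed : IsClosed S' := (isClosed_le hφc continuous_const).inter isClosed_Iic
    have hSbdd : BddAbove S' := ⟨0, fun y hy => hy.2⟩
    set a := sSup S' with hadef
    have haS : a ∈ S' := hSclosed.csSup_mem hSne hSbdd
    have haφ : φ a ≤ 0 := haS.1
    have ha0 : a ≤ 0 := haS.2
    have haneg : a < 0 := by
      rcases eq_or_lt_of_le ha0 with h | h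
      · exfalso; rw [h, hφ0] at haφ; linarith
      · exact h
    have hlt : ∀ t, a < t → t ≤ 0 → 0 < φ t := by
      intro t hat ht0
      by_contra hc
      push_neg at hc
      exact absurd (le_csSup hSbdd (⟨hc, ht0⟩ : t ∈ S')) (not_le.2 hat)
    have hφa : φ a = 0 := by
      refine le_antisymm haφ ?_
      by_contra hc
      push_neg at hc
      have h2 : ∀ᶠ y in nhds a, φ y < 0 := (hφc.tendsto a).eventually (Iio_mem_nhds hc)
      have h3' : ∀ᶠ y in nhds a, y < 0 := Iio_mem_nhds haneg
      have h4 := (h2.and h3').filter_mono (nhdsWithin_le_nhds (s := Ioi a))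
      obtain ⟨y, ⟨hy1, hy2⟩, hy3⟩ := (h4.and self_mem_nhdsWithin).exists
      exact absurd (hlt y hy3 hy2.le) (by linarith)
    have hφnn : ∀ t ∈ Icc a 0, 0 ≤ φ t := by
      intro t ⟨ht1, ht2⟩
      rcases eq_or_lt_of_le ht1 with h | h
      · rw [← h, hφa]
      · exact (hlt t h ht2).le
    have hψ0 : ψ 0 < 0 := step2 0 le_rfl
    have hψle : ∀ t ∈ Icc a 0, ψ t ≤ ψ 0 := fun t ht =>
      psi_mono t 0 ht.2 (fun u hu => hφnn u ⟨le_trans ht.1 hu.1, hu.2⟩)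
    have h1 : ∫ t in a..0, ψ t = φ 0 - φ a := hFTC1 a 0
    have h2 : (∫ t in a..0, ψ t) ≤ ∫ t in a..0, ψ 0 :=
      intervalIntegral.integral_mono_on ha0 (hψc.intervalIntegrable _ _)
        intervalIntegrable_const hψle
    rw [intervalIntegral.integral_const, smul_eq_mul] at h2
    rw [h1, hφa, hφ0] at h2
    nlinarith
  have hφpos : ∀ x : ℝ, 0 < φ x := by
    intro x; rcases lt_or_ge x 0 with h | h
    · exact step3 x h
    · exact step1 x h
  have hψneg : ∀ x : ℝ, ψ x < 0 := by
    intro x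
    rcases le_or_gt 0 x with h | h
    · exact step2 x h
    · have := psi_mono x 0 h.le (fun u _ => (hφpos u).le)
      linarith [step2 0 le_rfl]
  have hψmono : Monotone ψ := fun x y hxy =>
    psi_mono x y hxy (fun u _ => (hφpos u).le)
  have hψbdd : BddAbove (range ψ) := ⟨0, by rintro y ⟨x, rfl⟩; exact (hψneg x).le⟩
  have hψtop : Tendsto ψ atTop (nhds 0) := by
    have htends := tendsto_atTop_ciSup hψmono hψbdd
    have hL0 : (⨆ x, ψ x) = 0 := by
      have hL_le : (⨆ x, ψ x) ≤ 0 := ciSup_le fun x => (hψneg x).le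
      rcases eq_or_lt_of_le hL_le with h | h
      · exact h
      · exfalso
        set L := ⨆ x, ψ x with hLdef
        have hLlt : L < 0 := h
        have hlin : ∀ x : ℝ, 0 ≤ x → φ x ≤ 1 + L * x := by
          intro x hx
          have h1 : ∫ t in (0:ℝ)..x, ψ t = φ x - φ 0 := hFTC1 0 x
          have h2 : (∫ t in (0:ℝ)..x, ψ t) ≤ ∫ t in (0:ℝ)..x, L :=
            intervalIntegral.integral_mono_on hx (hψc.intervalIntegrable _ _)
              intervalIntegrable_const (fun t _ => le_ciSup hψbdd t)
          rw [intervalIntegral.integral_const, smul_eq_mul] at h2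
          rw [h1, hφ0] at h2
          linarith
        have hLne : L ≠ 0 := ne_of_lt hLlt
        have hxval : (0:ℝ) ≤ 2 / (-L) := by
          apply div_nonneg (by norm_num)
          linarith
        have hlin2 := hlin (2 / (-L)) hxval
        have h5 : L * (2 / (-L)) = -2 := by
          rw [div_neg, mul_neg, mul_div_assoc', mul_comm, mul_div_assoc, div_self hLne, mul_one]
        nlinarith [hφpos (2 / (-L))]
    rw [← hL0]; exact htends
  have hderivφ : deriv φ = ψ := funext fun x => (hdiff x).deriv
  have hφlip : LocallyLipschitz φ := by
    apply ContDiff.locallyLipschitz (𝕂 := ℝ)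
    rw [contDiff_one_iff_deriv]
    exact ⟨fun x => (hdiff x).differentiableAt, by rw [hderivφ]; exact hψc⟩
  -- energy functions
  have hElip : ∀ w : ℝ, LocallyLipschitz (fun y => ψ y ^ 2 - w * φ y ^ 2) := by
    intro w
    have h1 : LocallyLipschitz (fun y => (φ y, ψ y)) := hφlip.prodMk hlip
    have h2 : ContDiff ℝ 1 (fun p : ℝ × ℝ => p.2 ^ 2 - w * p.1 ^ 2) :=
      (contDiff_snd.pow 2).sub (contDiff_const.mul (contDiff_fst.pow 2))
    exact h2.locallyLipschitz.comp h1
  have hEder : ∀ w : ℝ, ∀ᵐ x : ℝ ∂volume,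
      HasDerivAt (fun y => ψ y ^ 2 - w * φ y ^ 2) (2 * (V x - w) * (φ x * ψ x)) x := by
    intro w
    filter_upwards [hode] with x hx
    have h1 : HasDerivAt (fun y => ψ y ^ 2) (2 * ψ x * (V x * φ x)) x := by
      have h := hx.pow 2; simp at h; exact h
    have h2 : HasDerivAt (fun y => φ y ^ 2) (2 * φ x * ψ x) x := by
      have h := (hdiff x).pow 2; simp at h; exact h
    have h3 := h1.fun_sub (h2.const_mul w)
    exact h3.congr_deriv (by ring)
  have hgE : ∀ w : ℝ, AEStronglyMeasurable (fun t => 2 * (V t - w) * (φ t * ψ t)) volume := by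
    intro w
    exact ((measurable_const.mul (hmeas.sub measurable_const)).mul
      (hφc.measurable.mul hψc.measurable)).aestronglyMeasurable
  have hEftc : ∀ w : ℝ, ∀ x y : ℝ, x ≤ y →
      (ψ y ^ 2 - w * φ y ^ 2) - (ψ x ^ 2 - w * φ x ^ 2)
        = ∫ t in x..y, 2 * (V t - w) * (φ t * ψ t) := by
    intro w x y hxy
    exact ftc_lip (hElip w) (hgE w) (hEder w) hxy
  have hEtends : ∀ w : ℝ, Tendsto (fun y => ψ y ^ 2 - w * φ y ^ 2) atTop (nhds 0) := by
    intro w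
    have h1 : Tendsto (fun y => ψ y ^ 2) atTop (nhds 0) := by
      have := hψtop.mul hψtop
      simp only [mul_zero] at this
      simpa [pow_two] using this
    have h2 : Tendsto (fun y => w * φ y ^ 2) atTop (nhds 0) := by
      have h3 := (hlim.mul hlim).const_mul w
      simp only [mul_zero] at h3
      simpa [pow_two] using h3
    simpa using h1.sub h2
  have hP : ∀ x : ℝ, 0 ≤ ψ x ^ 2 - v0 * φ x ^ 2 := by
    intro x
    refine le_of_tendsto (hEtends v0) ?_
    filter_upwards [eventually_ge_atTop x] with y hy
    have h := hEftc v0 x y hy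
    have h2 : (∫ t in x..y, 2 * (V t - v0) * (φ t * ψ t)) ≤ 0 := by
      rw [intervalIntegral.integral_of_le hy]
      apply integral_nonpos_of_ae
      filter_upwards [ae_restrict_of_ae hbd] with t ht
      have hp := hφpos t
      have hn := hψneg t
      show 2 * (V t - v0) * (φ t * ψ t) ≤ (0:ℝ)
      have hφψ : φ t * ψ t ≤ 0 := mul_nonpos_of_nonneg_of_nonpos hp.le hn.le
      have hm := mul_nonpos_of_nonneg_of_nonpos (sub_nonneg.2 ht.1) hφψ
      linarith
    show ψ y ^ 2 - v0 * φ y ^ 2 ≤ ψ x ^ 2 - v0 * φ x ^ 2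
    linarith
  have hQ : ∀ x : ℝ, ψ x ^ 2 - v1 * φ x ^ 2 ≤ 0 := by
    intro x
    refine ge_of_tendsto (hEtends v1) ?_
    filter_upwards [eventually_ge_atTop x] with y hy
    have h := hEftc v1 x y hy
    have h2 : 0 ≤ ∫ t in x..y, 2 * (V t - v1) * (φ t * ψ t) := by
      rw [intervalIntegral.integral_of_le hy]
      apply integral_nonneg_of_ae
      filter_upwards [ae_restrict_of_ae hbd] with t ht
      have hp := hφpos t
      have hn := hψneg t
      show (0:ℝ) ≤ 2 * (V t - v1) * (φ t * ψ t)
      have hφψ : φ t * ψ t ≤ 0 := mul_nonpos_of_nonneg_of_nonpos hp.le hn.le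
      have hm := mul_nonneg (sub_nonneg.2 ht.2) (neg_nonneg.2 hφψ)
      nlinarith [hm]
    show ψ x ^ 2 - v1 * φ x ^ 2 ≤ ψ y ^ 2 - v1 * φ y ^ 2
    linarith
  have hub : ∀ x : ℝ, ψ x ≤ -Real.sqrt v0 * φ x := by
    intro x
    have h1 : v0 * φ x ^ 2 ≤ ψ x ^ 2 := by linarith [hP x]
    have h2 : Real.sqrt (v0 * φ x ^ 2) ≤ Real.sqrt (ψ x ^ 2) := Real.sqrt_le_sqrt h1
    rw [Real.sqrt_mul h0.le, Real.sqrt_sq_eq_abs, Real.sqrt_sq_eq_abs,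
      abs_of_nonneg (hφpos x).le, abs_of_neg (hψneg x)] at h2
    linarith
  have hlb : ∀ x : ℝ, -Real.sqrt v1 * φ x ≤ ψ x := by
    intro x
    have h1 : ψ x ^ 2 ≤ v1 * φ x ^ 2 := by linarith [hQ x]
    have h2 : Real.sqrt (ψ x ^ 2) ≤ Real.sqrt (v1 * φ x ^ 2) := Real.sqrt_le_sqrt h1
    rw [Real.sqrt_mul hv1.le, Real.sqrt_sq_eq_abs, Real.sqrt_sq_eq_abs,
      abs_of_nonneg (hφpos x).le, abs_of_neg (hψneg x)] at h2
    linarith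
  have hAder : ∀ (r : ℝ) (x : ℝ), HasDerivAt (fun y => φ y * Real.exp (r * y))
      ((ψ x + r * φ x) * Real.exp (r * x)) x := by
    intro r x
    have h1 : HasDerivAt (fun y : ℝ => r * y) r x := by
      simpa using (hasDerivAt_id x).const_mul r
    have h2 : HasDerivAt (fun y => Real.exp (r * y)) (Real.exp (r * x) * r) x := by
      simpa [Function.comp_def] using (Real.hasDerivAt_exp (r * x)).comp x h1
    have h3 := (hdiff x).fun_mul h2
    exact h3.congr_deriv (by ring)
  have hA : Antitone (fun y => φ y * Real.exp (Real.sqrt v0 * y)) := by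
    apply antitone_of_deriv_nonpos
    · exact fun x => (hAder _ x).differentiableAt
    · intro x
      rw [(hAder _ x).deriv]
      have h1 := hub x
      have h2 := Real.exp_pos (Real.sqrt v0 * x)
      nlinarith
  have hB : Monotone (fun y => φ y * Real.exp (Real.sqrt v1 * y)) := by
    apply monotone_of_deriv_nonneg
    · exact fun x => (hAder _ x).differentiableAt
    · intro x
      rw [(hAder _ x).deriv]
      have h1 := hlb x
      have h2 := Real.exp_pos (Real.sqrt v1 * x)
      nlinarith
  have hsqrt01 : Real.sqrt v0 ≤ Real.sqrt v1 := Real.sqrt_le_sqrt h01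
  intro x
  rcases le_or_gt 0 x with hx | hx
  · have hmax : max (Real.sqrt v0 * x) (Real.sqrt v1 * x) = Real.sqrt v1 * x :=
      max_eq_right (mul_le_mul_of_nonneg_right hsqrt01 hx)
    have hmin : min (Real.sqrt v0 * x) (Real.sqrt v1 * x) = Real.sqrt v0 * x :=
      min_eq_left (mul_le_mul_of_nonneg_right hsqrt01 hx)
    rw [hmax, hmin]
    constructor
    · have h1 := hB hx
      simp only [hφ0, mul_zero, Real.exp_zero, mul_one] at h1
      have h2 := Real.exp_pos (Real.sqrt v1 * x)
      have h3 : Real.exp (-(Real.sqrt v1 * x)) * Real.exp (Real.sqrt v1 * x) = 1 := by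
        rw [← Real.exp_add]; simp
      nlinarith
    · have h1 := hA hx
      simp only [hφ0, mul_zero, Real.exp_zero, mul_one] at h1
      have h2 := Real.exp_pos (Real.sqrt v0 * x)
      have h3 : Real.exp (-(Real.sqrt v0 * x)) * Real.exp (Real.sqrt v0 * x) = 1 := by
        rw [← Real.exp_add]; simp
      nlinarith
  · have hmax : max (Real.sqrt v0 * x) (Real.sqrt v1 * x) = Real.sqrt v0 * x :=
      max_eq_left (mul_le_mul_of_nonpos_right hsqrt01 hx.le)
    have hmin : min (Real.sqrt v0 * x) (Real.sqrt v1 * x) = Real.sqrt v1 * x :=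
      min_eq_right (mul_le_mul_of_nonpos_right hsqrt01 hx.le)
    rw [hmax, hmin]
    constructor
    · have h1 := hA hx.le
      simp only [hφ0, mul_zero, Real.exp_zero, mul_one] at h1
      have h2 := Real.exp_pos (Real.sqrt v0 * x)
      have h3 : Real.exp (-(Real.sqrt v0 * x)) * Real.exp (Real.sqrt v0 * x) = 1 := by
        rw [← Real.exp_add]; simp
      nlinarith
    · have h1 := hB hx.le
      simp only [hφ0, mul_zero, Real.exp_zero, mul_one] at h1
      have h2 := Real.exp_pos (Real.sqrt v1 * x)
      have h3 : Real.exp (-(Real.sqrt v1 * x)) * Real.exp (Real.sqrt v1 * x) = 1 := by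
        rw [← Real.exp_add]; simp
      nlinarith

/-- two-sided exponential estimates for the fundamental solutions `φ₊, φ₋`. -/
theorem stmt10 (V : ℝ → ℝ) (v0 v1 : ℝ) (hmeas : Measurable V) (h0 : 0 < v0)
    (hbd : ∀ᵐ x : ℝ ∂volume, v0 ≤ V x ∧ V x ≤ v1)
    (φp φm : ℝ → ℝ) (hp : SolP V φp) (hm : SolM V φm) :
    ∀ x : ℝ,
      (Real.sqrt (v0 / v1) * Real.exp (-(max (Real.sqrt v0 * x) (Real.sqrt v1 * x))) ≤ φp x ∧
        φp x ≤ Real.sqrt (v1 / v0) * Real.exp (-(min (Real.sqrt v0 * x) (Real.sqrt v1 * x)))) ∧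
      (Real.sqrt (v0 / v1) * Real.exp (min (Real.sqrt v0 * x) (Real.sqrt v1 * x)) ≤ φm x ∧
        φm x ≤ Real.sqrt (v1 / v0) * Real.exp (max (Real.sqrt v0 * x) (Real.sqrt v1 * x))) := by
  have haebot : (ae (volume : Measure ℝ)).NeBot := by
    refine ae_neBot.2 ?_
    simp [← Measure.measure_univ_eq_zero]
  have hv01 : v0 ≤ v1 := by
    obtain ⟨y, hy⟩ := hbd.exists
    exact le_trans hy.1 hy.2
  have hv1 : 0 < v1 := lt_of_lt_of_le h0 hv01
  have hs1 : Real.sqrt (v0 / v1) ≤ 1 := by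
    rw [Real.sqrt_le_one]
    rw [div_le_one hv1]
    exact hv01
  have hs0 : (1:ℝ) ≤ Real.sqrt (v1 / v0) := by
    rw [Real.one_le_sqrt]
    rw [le_div_iff₀ h0]
    linarith
  obtain ⟨hpdiff, hplip, hpode, hp0, hptop⟩ := hp
  have hmain_p := main_bound hmeas h0 hv01 hbd
    (fun x => (hpdiff x).hasDerivAt) hplip hpode hp0 hptop
  obtain ⟨hmdiff, hmlip, hmode, hm0, hmbot⟩ := hm
  set χ : ℝ → ℝ := fun x => φm (-x) with hχdef
  set ψχ : ℝ → ℝ := fun x => -(deriv φm (-x)) with hψχdef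
  have hnegderiv : ∀ x : ℝ, HasDerivAt (fun y : ℝ => -y) (-1) x := by
    intro x
    simpa using hasDerivAt_neg' (x := x)
  have hχdiff : ∀ x, HasDerivAt χ (ψχ x) x := by
    intro x
    have h1 : HasDerivAt φm (deriv φm (-x)) (-x) := (hmdiff (-x)).hasDerivAt
    have h3 := h1.comp x (hnegderiv x)
    have h4 : deriv φm (-x) * (-1) = ψχ x := by simp [hψχdef]
    rw [h4] at h3
    exact h3
  have hneglip : LocallyLipschitz (fun y : ℝ => -y) := by
    have : LipschitzWith 1 (fun y : ℝ => -y) := LipschitzWith.id.neg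
    exact this.locallyLipschitz
  have hχlip : LocallyLipschitz ψχ := hneglip.comp (hmlip.comp hneglip)
  have haeneg : ∀ (P : ℝ → Prop), (∀ᵐ y : ℝ ∂volume, P y) → (∀ᵐ x : ℝ ∂volume, P (-x)) := by
    intro P hP
    rw [ae_iff] at hP ⊢
    have he : {x : ℝ | ¬ P (-x)} = Neg.neg ⁻¹' {y | ¬ P y} := rfl
    rw [he, Measure.measure_preimage_neg]
    exact hP
  have hbdχ : ∀ᵐ x : ℝ ∂volume, v0 ≤ V (-x) ∧ V (-x) ≤ v1 :=
    haeneg (fun y => v0 ≤ V y ∧ V y ≤ v1) hbd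
  have hodeχ : ∀ᵐ x : ℝ ∂volume, HasDerivAt ψχ (V (-x) * χ x) x := by
    filter_upwards [haeneg (fun y => HasDerivAt (deriv φm) (V y * φm y) y) hmode] with x hx
    have h3 := (hx.comp x (hnegderiv x)).neg
    have h4 : -(V (-x) * φm (-x) * (-1)) = V (-x) * χ x := by simp [hχdef]
    rw [h4] at h3
    exact h3
  have hχtop : Tendsto χ atTop (nhds 0) := hmbot.comp tendsto_neg_atTop_atBot
  have hχ0 : χ 0 = 1 := by simp [hχdef, hm0]
  have hmain_m := main_bound (V := fun x => V (-x)) (hmeas.comp measurable_neg) h0 hv01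
    hbdχ hχdiff hχlip hodeχ hχ0 hχtop
  intro x
  obtain ⟨hp_lb, hp_ub⟩ := hmain_p x
  obtain ⟨hm_lb, hm_ub⟩ := hmain_m (-x)
  have hχx : χ (-x) = φm x := by simp [hχdef]
  have hrw1 : Real.sqrt v0 * (-x) = -(Real.sqrt v0 * x) := by ring
  have hrw2 : Real.sqrt v1 * (-x) = -(Real.sqrt v1 * x) := by ring
  rw [hχx, hrw1, hrw2] at hm_lb hm_ub
  rw [max_neg_neg, neg_neg] at hm_lb
  rw [min_neg_neg, neg_neg] at hm_ub
  constructor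
  · constructor
    · calc Real.sqrt (v0 / v1) * Real.exp (-(max (Real.sqrt v0 * x) (Real.sqrt v1 * x)))
          ≤ 1 * Real.exp (-(max (Real.sqrt v0 * x) (Real.sqrt v1 * x))) :=
            mul_le_mul_of_nonneg_right hs1 (Real.exp_pos _).le
        _ = Real.exp (-(max (Real.sqrt v0 * x) (Real.sqrt v1 * x))) := one_mul _
        _ ≤ φp x := hp_lb
    · calc φp x ≤ Real.exp (-(min (Real.sqrt v0 * x) (Real.sqrt v1 * x))) := hp_ub
        _ ≤ Real.sqrt (v1 / v0) * Real.exp (-(min (Real.sqrt v0 * x) (Real.sqrt v1 * x))) :=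
            le_mul_of_one_le_left (Real.exp_pos _).le hs0
  · constructor
    · calc Real.sqrt (v0 / v1) * Real.exp (min (Real.sqrt v0 * x) (Real.sqrt v1 * x))
          ≤ 1 * Real.exp (min (Real.sqrt v0 * x) (Real.sqrt v1 * x)) :=
            mul_le_mul_of_nonneg_right hs1 (Real.exp_pos _).le
        _ = Real.exp (min (Real.sqrt v0 * x) (Real.sqrt v1 * x)) := one_mul _
        _ ≤ φm x := hm_lb
    · calc φm x ≤ Real.exp (max (Real.sqrt v0 * x) (Real.sqrt v1 * x)) := hm_ub
        _ ≤ Real.sqrt (v1 / v0) * Real.exp (max (Real.sqrt v0 * x) (Real.sqrt v1 * x)) :=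
            le_mul_of_one_le_left (Real.exp_pos _).le hs0
end
end

section
/- The Wronskian x ↦ φ_+(x)φ_-'(x) − φ_+'(x)φ_-(x) is constant on ℝ, equal to W := φ_-'(0) − φ_+'(0) > 0, and the fundamental solutions are linked by φ_-(x) = W φ_+(x) H_+(x) and φ_+(x) = W φ_-(x) H_-(x) for every x ∈ ℝ, where H_+(x) := ∫_{-∞}^x φ_+(ξ)^{-2} dξ and H_-(x) := ∫_x^{∞} φ_-(ξ)^{-2} dξ (both integrals converge). -/
open MeasureTheory Real Set Filter
open Topology

noncomputable section

/-- A locally Lipschitz function is Lipschitz on every compact interval. -/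
lemma locallyLipschitz_lipschitzOnWith_Icc {f : ℝ → ℝ} (hf : LocallyLipschitz f) (a b : ℝ) :
    ∃ K : NNReal, LipschitzOnWith K f (Icc a b) := by
  rcases le_or_gt b a with hba | hab
  · refine ⟨1, fun x hx y hy => ?_⟩
    have : x = y := le_antisymm (hx.2.trans (hba.trans hy.1)) (hy.2.trans (hba.trans hx.1))
    simp [this]
  set s : Set ℝ := {x | x ∈ Icc a b ∧ ∃ K : NNReal, LipschitzOnWith K f (Icc a x)} with hs
  have ha : a ∈ s := by
    refine ⟨⟨le_refl a, hab.le⟩, 1, fun x hx y hy => ?_⟩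
    have : x = y := le_antisymm (hx.2.trans hy.1) (hy.2.trans hx.1)
    simp [this]
  have hne : s.Nonempty := ⟨a, ha⟩
  have hbdd : BddAbove s := ⟨b, fun x hx => hx.1.2⟩
  set c := sSup s with hc
  have hcab : c ∈ Icc a b := ⟨le_csSup hbdd ha, csSup_le hne fun x hx => hx.1.2⟩
  rcases hf c with ⟨Kc, t, ht, hKc⟩
  rcases Metric.mem_nhds_iff.1 ht with ⟨δ, hδ, hball⟩
  have hIcc_sub : Icc (c - δ/2) (c + δ/2) ⊆ t := by
    intro y hy
    apply hball
    rw [Metric.mem_ball, Real.dist_eq, abs_sub_lt_iff]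
    exact ⟨by linarith [hy.2], by linarith [hy.1]⟩
  obtain ⟨x, hxs, hxgt⟩ : ∃ x ∈ s, c - δ/2 < x :=
    exists_lt_of_lt_csSup hne (show c - δ/2 < c by linarith)
  obtain ⟨K1, hK1⟩ := hxs.2
  set m := min b (c + δ/2) with hm
  have hxc : x ≤ c := le_csSup hbdd hxs
  have hcm : c ≤ m := le_min hcab.2 (by linarith)
  have hax : a ≤ x := hxs.1.1
  have hsub2 : Icc x m ⊆ t := fun y hy => hIcc_sub
    ⟨le_trans (by linarith) hy.1, le_trans hy.2 (min_le_right _ _)⟩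
  have hKc2 : ∀ p ∈ Icc x m, ∀ q ∈ Icc x m, dist (f p) (f q) ≤ Kc * dist p q :=
    fun p hp q hq => (hKc.mono hsub2).dist_le_mul p hp q hq
  have key : LipschitzOnWith (max K1 Kc) f (Icc a m) := by
    apply LipschitzOnWith.of_dist_le_mul
    intro u hu v hv
    wlog huv : u ≤ v generalizing u v
    · rw [dist_comm u v, dist_comm (f u) (f v)]; exact this v hv u hu (le_of_not_ge huv)
    have hcast1 : (K1 : ℝ) ≤ (max K1 Kc : NNReal) := by exact_mod_cast le_max_left K1 Kc
    have hcast2 : (Kc : ℝ) ≤ (max K1 Kc : NNReal) := by exact_mod_cast le_max_right K1 Kc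
    rcases le_or_gt v x with hvx | hvx
    · exact le_trans (hK1.dist_le_mul u ⟨hu.1, huv.trans hvx⟩ v ⟨hv.1, hvx⟩)
        (by gcongr)
    rcases le_or_gt x u with hxu | hxu
    · exact le_trans (hKc2 u ⟨hxu, hu.2⟩ v ⟨hvx.le, hv.2⟩) (by gcongr)
    · have h1 : dist (f u) (f x) ≤ K1 * dist u x :=
        hK1.dist_le_mul u ⟨hu.1, hxu.le⟩ x ⟨hax, le_refl x⟩
      have h2 : dist (f x) (f v) ≤ Kc * dist x v :=
        hKc2 x ⟨le_refl x, hxc.trans hcm⟩ v ⟨hvx.le, hv.2⟩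
      have hd1 : dist u x = x - u := by rw [Real.dist_eq, abs_of_nonpos (by linarith)]; ring
      have hd2 : dist x v = v - x := by rw [Real.dist_eq, abs_of_nonpos (by linarith)]; ring
      have hd3 : dist u v = v - u := by rw [Real.dist_eq, abs_of_nonpos (by linarith)]; ring
      calc dist (f u) (f v) ≤ dist (f u) (f x) + dist (f x) (f v) := dist_triangle _ _ _
        _ ≤ K1 * dist u x + Kc * dist x v := add_le_add h1 h2
        _ ≤ (max K1 Kc : NNReal) * dist u x + (max K1 Kc : NNReal) * dist x v := by
            gcongr
        _ = (max K1 Kc : NNReal) * dist u v := by rw [hd1, hd2, hd3]; ring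
  have hms : m ∈ s := ⟨⟨le_trans hax (by linarith), min_le_left _ _⟩, _, key⟩
  have hmc : m ≤ c := le_csSup hbdd hms
  have hcb : c = b := by
    by_contra hne'
    have : c < b := lt_of_le_of_ne hcab.2 hne'
    have : c < m := lt_min this (by linarith)
    linarith
  have : m = b := by rw [hm, hcb]; exact min_eq_left (by linarith)
  exact ⟨_, this ▸ key⟩
/-- Core lemma: a Lipschitz function with a.e. nonnegative derivative on `(a,b)` satisfies
`f a ≤ f b`. -/
lemma claimA {f : ℝ → ℝ} {K : NNReal} {a b : ℝ} (hab : a ≤ b)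
    (hL : LipschitzOnWith K f (Icc a b))
    (hae : ∀ᵐ x : ℝ ∂volume, x ∈ Ioo a b → ∃ d : ℝ, 0 ≤ d ∧ HasDerivAt f d x) :
    f a ≤ f b := by
  rcases eq_or_lt_of_le hab with rfl | hab
  · exact le_refl _
  have main : ∀ ε : ℝ, 0 < ε → f a ≤ f b + ((K : ℝ) + 1) * ε + ε * (b - a) := by
    intro ε hε
    set N : Set ℝ := {x | ¬ (x ∈ Ioo a b → ∃ d : ℝ, 0 ≤ d ∧ HasDerivAt f d x)} with hN
    have hNnull : volume N = 0 := hae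
    have hN'null : volume (N ∪ {a}) = 0 := by
      rw [measure_union_null_iff]; exact ⟨hNnull, volume_singleton⟩
    obtain ⟨U, hNU, hUopen, hUvol⟩ :=
      Set.exists_isOpen_lt_of_lt (N ∪ {a}) (ENNReal.ofReal ε)
        (by rw [hN'null]; exact ENNReal.ofReal_pos.2 hε)
    have hUfin : ∀ s : Set ℝ, s ⊆ U → volume s ≠ ⊤ :=
      fun s hs => ((measure_mono hs).trans_lt (hUvol.trans_le le_top)).ne
    set m : ℝ → ℝ := fun x => (volume (U ∩ Ioc a x)).toReal with hmdef
    have hmfin : ∀ x, volume (U ∩ Ioc a x) ≠ ⊤ := fun x => hUfin _ inter_subset_left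
    have hm_mono : Monotone m := by
      intro x y hxy
      exact (ENNReal.toReal_le_toReal (hmfin x) (hmfin y)).2
        (measure_mono (inter_subset_inter_right _ (Ioc_subset_Ioc_right hxy)))
    have hm_lip : ∀ x y, x ≤ y → m y - m x ≤ y - x := by
      intro x y hxy
      have hsub : U ∩ Ioc a y ⊆ (U ∩ Ioc a x) ∪ Ioc x y := by
        rintro z ⟨hzU, hz1, hz2⟩
        rcases le_or_gt z x with h | h
        · exact Or.inl ⟨hzU, hz1, h⟩
        · exact Or.inr ⟨h, hz2⟩
      have h1 : volume (U ∩ Ioc a y) ≤ volume (U ∩ Ioc a x) + volume (Ioc x y) :=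
        (measure_mono hsub).trans (measure_union_le _ _)
      rw [Real.volume_Ioc] at h1
      have hfin2 : volume (U ∩ Ioc a x) + ENNReal.ofReal (y - x) ≠ ⊤ :=
        ENNReal.add_ne_top.2 ⟨hmfin x, ENNReal.ofReal_ne_top⟩
      have h2 := (ENNReal.toReal_le_toReal (hmfin y) hfin2).2 h1
      rw [ENNReal.toReal_add (hmfin x) ENNReal.ofReal_ne_top,
        ENNReal.toReal_ofReal (by linarith)] at h2
      linarith
    have hm_cont : Continuous m := by
      rw [Metric.continuous_iff]
      intro x η hη
      refine ⟨η, hη, fun y hy => ?_⟩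
      rw [Real.dist_eq] at hy ⊢
      rcases le_or_gt x y with h | h
      · have h1 := hm_lip x y h
        have h2 := hm_mono h
        rw [abs_of_nonneg (by linarith)]
        rw [abs_of_nonneg (by linarith)] at hy
        linarith
      · have h1 := hm_lip y x h.le
        have h2 := hm_mono h.le
        rw [abs_of_nonpos (by linarith)]
        rw [abs_of_nonpos (by linarith)] at hy
        linarith
    set h : ℝ → ℝ := fun x => f x + ((K : ℝ) + 1) * m x + ε * x with hhdef
    have hcont : ContinuousOn (fun x => -h x) (Icc a b) := by
      apply ContinuousOn.neg
      exact (hL.continuousOn.add ((continuous_const.mul hm_cont).continuousOn)).add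
        (continuous_const.mul continuous_id).continuousOn
    have hslope : ∀ x ∈ Ico a b, ∀ᶠ z in 𝓝[>] x, 0 < h z - h x := by
      intro x hx
      by_cases hxU : x ∈ U
      · rcases Metric.isOpen_iff.1 hUopen x hxU with ⟨δ, hδ, hball⟩
        have hIoo : Ioo (x - δ) (x + δ) ⊆ U := by rw [← Real.ball_eq_Ioo]; exact hball
        have hmem : Ioo x (min b (x + δ)) ∈ 𝓝[>] x :=
          Ioo_mem_nhdsGT_of_mem ⟨le_refl x, lt_min hx.2 (by linarith)⟩
        filter_upwards [hmem] with z hz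
        have hxz : x < z := hz.1
        have hzb : z ≤ b := hz.2.le.trans (min_le_left _ _)
        -- m z - m x = z - x
        have hIocU : Ioc x z ⊆ U := fun t ht => hIoo ⟨by linarith [ht.1], by
          have := ht.2; have := hz.2; have := min_le_right b (x + δ); linarith⟩
        have hunion : U ∩ Ioc a z = (U ∩ Ioc a x) ∪ Ioc x z := by
          apply Subset.antisymm
          · rintro t ⟨htU, ht1, ht2⟩
            rcases le_or_gt t x with hh | hh
            · exact Or.inl ⟨htU, ht1, hh⟩
            · exact Or.inr ⟨hh, ht2⟩
          · rintro t (⟨htU, ht1, ht2⟩ | ht)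
            · exact ⟨htU, ht1, ht2.trans hxz.le⟩
            · exact ⟨hIocU ht, lt_of_le_of_lt hx.1 ht.1, ht.2⟩
        have hdisj : Disjoint (U ∩ Ioc a x) (Ioc x z) := by
          rw [Set.disjoint_left]
          rintro t ⟨_, _, ht2⟩ ht'
          exact absurd ht'.1 (not_lt.2 ht2)
        have hmz : m z - m x = z - x := by
          rw [hmdef]
          simp only
          rw [hunion, measure_union hdisj measurableSet_Ioc,
            ENNReal.toReal_add (hmfin x) (by rw [Real.volume_Ioc]; exact ENNReal.ofReal_ne_top),
            Real.volume_Ioc, ENNReal.toReal_ofReal (by linarith)]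
          ring
        have hf' : f z - f x ≥ -(K : ℝ) * (z - x) := by
          have := hL.dist_le_mul z ⟨hx.1.trans hxz.le, hzb⟩ x ⟨hx.1, hx.2.le⟩
          rw [Real.dist_eq, Real.dist_eq, abs_of_pos (by linarith : (0:ℝ) < z - x)] at this
          have := abs_le.1 (le_trans (le_abs_self _) this |> fun h => abs_le.2 ⟨neg_le_of_abs_le
            (by rwa [abs_sub_comm] at this), le_of_abs_le (by rwa [abs_sub_comm] at this)⟩)
          linarith [this.1]
        have : h z - h x = (f z - f x) + ((K : ℝ) + 1) * (m z - m x) + ε * (z - x) := by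
          rw [hhdef]; ring
        rw [this, hmz]
        nlinarith
      · have hxa : x ≠ a := fun hxa => hxU (hNU (Or.inr (by rw [hxa]; rfl)))
        have hxIoo : x ∈ Ioo a b := ⟨lt_of_le_of_ne hx.1 (Ne.symm hxa), hx.2⟩
        have hxN : x ∉ N := fun hxN => hxU (hNU (Or.inl hxN))
        obtain ⟨d, hd0, hdf⟩ : ∃ d : ℝ, 0 ≤ d ∧ HasDerivAt f d x := (not_not.mp hxN) hxIoo
        have hT : Tendsto (slope f x) (𝓝[>] x) (𝓝 d) :=
          (hasDerivAt_iff_tendsto_slope.1 hdf).mono_left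
            (nhdsWithin_mono x (fun z hz => ne_of_gt hz))
        have hev : ∀ᶠ z in 𝓝[>] x, -ε < slope f x z := hT (Ioi_mem_nhds (by linarith))
        filter_upwards [hev, self_mem_nhdsWithin] with z hsl (hz : x < z)
        have hfz : f z - f x = slope f x z * (z - x) := by
          rw [slope_def_field, div_mul_cancel₀]
          exact sub_ne_zero.2 (ne_of_gt hz)
        have hm0 : 0 ≤ m z - m x := by linarith [hm_mono hz.le]
        have hhz : h z - h x = (f z - f x) + ((K : ℝ) + 1) * (m z - m x) + ε * (z - x) := by
          simp only [hhdef]; ring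
        have h3 : -ε * (z - x) < slope f x z * (z - x) :=
          mul_lt_mul_of_pos_right hsl (by linarith)
        have h4 : 0 ≤ ((K : ℝ) + 1) * (m z - m x) :=
          mul_nonneg (by linarith [K.coe_nonneg]) hm0
        rw [hhz, hfz]
        nlinarith
    have key : ∀ ⦃x⦄, x ∈ Icc a b → -h x ≤ (fun _ => -h a) x := by
      apply image_le_of_liminf_slope_right_le_deriv_boundary hcont (le_refl _)
        continuousOn_const (fun x _ => hasDerivWithinAt_const x _ _)
        (B' := fun _ => (0:ℝ))
      intro x hx r hr
      apply Filter.Eventually.frequently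
      filter_upwards [hslope x hx, self_mem_nhdsWithin] with z hz (hz' : x < z)
      rw [slope_def_field]
      have : (0:ℝ) < z - x := by linarith
      apply lt_of_le_of_lt _ hr
      apply div_nonpos_of_nonpos_of_nonneg _ this.le |>.trans (le_refl 0)
      linarith
    have hkey := key (right_mem_Icc.2 hab.le)
    simp only at hkey
    have hma : m a = 0 := by simp [hmdef]
    have hmb : m b ≤ ε := by
      have h1 : volume (U ∩ Ioc a b) ≤ ENNReal.ofReal ε :=
        le_trans (measure_mono inter_subset_left) hUvol.le
      have := (ENNReal.toReal_le_toReal (hmfin b) ENNReal.ofReal_ne_top).2 h1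
      rwa [ENNReal.toReal_ofReal hε.le] at this
    have hfin : f a + ((K : ℝ) + 1) * m a + ε * a ≤ f b + ((K : ℝ) + 1) * m b + ε * b := by
      have : -h b ≤ -h a := hkey
      simp only [hhdef] at this
      linarith
    have hK0 : (0:ℝ) ≤ (K : ℝ) := K.coe_nonneg
    rw [hma] at hfin
    nlinarith
  by_contra hlt
  push_neg at hlt
  have hK0 : (0:ℝ) ≤ (K : ℝ) := K.coe_nonneg
  set C : ℝ := (K : ℝ) + 1 + (b - a) with hC
  have hCpos : 0 < C := by simp only [hC]; linarith
  set ε : ℝ := (f a - f b) / (2 * C) with hε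
  have hεpos : 0 < ε := by
    apply div_pos (by linarith) (by linarith)
  have hmain := main ε hεpos
  have : ((K : ℝ) + 1) * ε + ε * (b - a) = (f a - f b) / 2 := by
    rw [hε, hC]; field_simp
  linarith

/-- Monotonicity from a.e. nonnegative derivative, for locally Lipschitz functions. -/
lemma mono_of_ae_deriv_nonneg {f : ℝ → ℝ} (hf : LocallyLipschitz f)
    (hae : ∀ᵐ x : ℝ ∂volume, ∃ d : ℝ, 0 ≤ d ∧ HasDerivAt f d x) : Monotone f := by
  intro x y hxy
  obtain ⟨K, hK⟩ := locallyLipschitz_lipschitzOnWith_Icc hf x y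
  exact claimA hxy hK (hae.mono fun t ht _ => ht)

/-- Local version on an interval. -/
lemma le_of_ae_deriv_nonneg_on {f : ℝ → ℝ} (hf : LocallyLipschitz f) {a b x y : ℝ}
    (hae : ∀ᵐ t : ℝ ∂volume, t ∈ Ioo a b → ∃ d : ℝ, 0 ≤ d ∧ HasDerivAt f d t)
    (hax : a ≤ x) (hxy : x ≤ y) (hyb : y ≤ b) : f x ≤ f y := by
  obtain ⟨K, hK⟩ := locallyLipschitz_lipschitzOnWith_Icc hf x y
  refine claimA hxy hK (hae.mono fun t ht h2 => ht ⟨lt_of_le_of_lt hax h2.1, lt_of_lt_of_le h2.2 hyb⟩)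

lemma LocallyLipschitz.neg' {f : ℝ → ℝ} (hf : LocallyLipschitz f) :
    LocallyLipschitz (fun x => -(f x)) :=
  ((LipschitzWith.id (α := ℝ)).neg.locallyLipschitz).comp hf

/-- Constancy from a.e. zero derivative, for locally Lipschitz functions. -/
lemma const_of_ae_deriv_zero {f : ℝ → ℝ} (hf : LocallyLipschitz f)
    (hae : ∀ᵐ x : ℝ ∂volume, HasDerivAt f 0 x) : ∀ x y, f x = f y := by
  have h1 : Monotone f := mono_of_ae_deriv_nonneg hf (hae.mono fun x hx => ⟨0, le_refl _, hx⟩)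
  have h2 : Monotone (fun x => -(f x)) := mono_of_ae_deriv_nonneg hf.neg'
    (hae.mono fun x hx => ⟨0, le_refl _, by simpa using hx.fun_neg⟩)
  intro x y
  rcases le_total x y with h | h
  · have := h1 h; have := h2 h; simp only [neg_le_neg_iff] at *; linarith
  · have := h1 h; have := h2 h; simp only [neg_le_neg_iff] at *; linarith

/-- Composition pattern for local Lipschitzness of expressions in `x, u x, v x`. -/
lemma locallyLipschitz_comp3 {g : ℝ × ℝ × ℝ → ℝ} (hg : ContDiff ℝ 1 g) {u v : ℝ → ℝ}
    (hu : LocallyLipschitz u) (hv : LocallyLipschitz v) :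
    LocallyLipschitz (fun x => g (x, u x, v x)) :=
  hg.locallyLipschitz.comp (LocallyLipschitz.id.prodMk (hu.prodMk hv))



/-! ### Basic facts -/

lemma SolP.cont {V φ : ℝ → ℝ} (hp : SolP V φ) : Continuous φ :=
  continuous_iff_continuousAt.2 fun x => (hp.1 x).continuousAt

lemma SolP.dcont {V φ : ℝ → ℝ} (hp : SolP V φ) : Continuous (deriv φ) :=
  hp.2.1.continuous

lemma SolP.contDiff {V φ : ℝ → ℝ} (hp : SolP V φ) : ContDiff ℝ 1 φ :=
  contDiff_one_iff_deriv.2 ⟨fun x => hp.1 x, hp.dcont⟩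

lemma SolP.locLip {V φ : ℝ → ℝ} (hp : SolP V φ) : LocallyLipschitz φ :=
  hp.contDiff.locallyLipschitz

lemma SolP.hasD {V φ : ℝ → ℝ} (hp : SolP V φ) (x : ℝ) : HasDerivAt φ (deriv φ x) x :=
  (hp.1 x).hasDerivAt

/-- FTC for `φ`. -/
lemma SolP.ftc {V φ : ℝ → ℝ} (hp : SolP V φ) (x y : ℝ) :
    φ y - φ x = ∫ t in x..y, deriv φ t :=
  (intervalIntegral.integral_deriv_eq_sub (fun t _ => hp.1 t)
    (hp.dcont.intervalIntegrable x y)).symm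

/-- Linear lower bound from a derivative lower bound. -/
lemma SolP.linear_lower {V φ : ℝ → ℝ} (hp : SolP V φ) {z x c : ℝ} (hzx : z ≤ x)
    (hc : ∀ t ∈ Icc z x, c ≤ deriv φ t) : φ z + c * (x - z) ≤ φ x := by
  have h1 : ∫ t in z..x, c ≤ ∫ t in z..x, deriv φ t := by
    apply intervalIntegral.integral_mono_on hzx (intervalIntegrable_const)
      (hp.dcont.intervalIntegrable z x) hc
  rw [intervalIntegral.integral_const, smul_eq_mul] at h1
  have h2 := hp.ftc z x
  linarith

/-- Linear upper bound from a derivative upper bound. -/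
lemma SolP.linear_upper {V φ : ℝ → ℝ} (hp : SolP V φ) {z x c : ℝ} (hzx : z ≤ x)
    (hc : ∀ t ∈ Icc z x, deriv φ t ≤ c) : φ x ≤ φ z + c * (x - z) := by
  have h1 : ∫ t in z..x, deriv φ t ≤ ∫ t in z..x, c := by
    apply intervalIntegral.integral_mono_on hzx (hp.dcont.intervalIntegrable z x)
      intervalIntegrable_const hc
  rw [intervalIntegral.integral_const, smul_eq_mul] at h1
  have h2 := hp.ftc z x
  linarith

/-! ### Energy estimate: `(φ, φ')` never vanishes simultaneously -/

lemma SolP.nonvanish {V φ : ℝ → ℝ} {v0 v1 : ℝ} (h0 : 0 < v0)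
    (hbd : ∀ᵐ x : ℝ ∂volume, v0 ≤ V x ∧ V x ≤ v1) (hp : SolP V φ) (z : ℝ) :
    ¬(φ z = 0 ∧ deriv φ z = 0) := by
  have hv01 : v0 ≤ v1 := by
    obtain ⟨x, hx1, hx2⟩ := hbd.exists
    linarith
  rintro ⟨hz1, hz2⟩
  set L : ℝ := v1 + 1 with hL
  have hLpos : 0 < L := by linarith
  set E : ℝ → ℝ := fun x => (deriv φ x) ^ 2 + (φ x) ^ 2 with hE
  have hE0 : 1 ≤ E 0 := by
    simp only [hE, hp.2.2.2.1]
    nlinarith [sq_nonneg (deriv φ 0)]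
  have hEz : E z = 0 := by simp [hE, hz1, hz2]
  have hEnn : ∀ x, 0 ≤ E x := fun x => by positivity
  -- local Lipschitzness of the two auxiliary functions
  have hlip : ∀ c : ℝ, LocallyLipschitz (fun x => exp (c * x) * E x) := by
    intro c
    have hg : ContDiff ℝ 1 (fun p : ℝ × ℝ × ℝ => exp (c * p.1) * (p.2.2 ^ 2 + p.2.1 ^ 2)) := by
      fun_prop
    exact locallyLipschitz_comp3 hg hp.locLip hp.2.1
  -- derivative computation
  have hder : ∀ c : ℝ, ∀ᵐ x : ℝ ∂volume, HasDerivAt (fun y => exp (c * y) * E y)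
      (exp (c * x) * (c * E x +
        (2 * deriv φ x * (V x * φ x) + 2 * φ x * deriv φ x))) x := by
    intro c
    filter_upwards [hp.2.2.1] with x hx
    have h1 : HasDerivAt (fun y => exp (c * y)) (exp (c * x) * c) x := by
      simpa using (((hasDerivAt_id x).const_mul c).exp)
    have h2 : HasDerivAt E (2 * deriv φ x * (V x * φ x) + 2 * φ x * deriv φ x) x := by
      have ha : HasDerivAt (fun y => (deriv φ y) ^ 2) (2 * deriv φ x * (V x * φ x)) x := by
        simpa [mul_comm, mul_assoc] using (hx.fun_pow 2)
      have hb : HasDerivAt (fun y => (φ y) ^ 2) (2 * φ x * deriv φ x) x := by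
        simpa [mul_comm, mul_assoc] using ((hp.hasD x).fun_pow 2)
      simpa [hE] using ha.fun_add hb
    have := h1.fun_mul h2
    refine this.congr_deriv ?_
    ring
  -- monotone increasing: `exp (L x) * E x`
  have hmono : Monotone (fun x => exp (L * x) * E x) := by
    apply mono_of_ae_deriv_nonneg (hlip L)
    filter_upwards [hder L, hbd] with x hx hb
    refine ⟨_, ?_, hx⟩
    have hexp : (0:ℝ) ≤ exp (L * x) := (exp_pos _).le
    apply mul_nonneg hexp
    simp only [hE, hL]
    nlinarith [sq_nonneg (deriv φ x + φ x), sq_nonneg (deriv φ x - φ x),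
      mul_nonneg (sub_nonneg.2 hb.2) (sq_nonneg (deriv φ x)),
      mul_nonneg (sub_nonneg.2 hb.2) (sq_nonneg (φ x)),
      mul_nonneg (show (0:ℝ) ≤ V x + 1 by linarith [hb.1]) (sq_nonneg (deriv φ x + φ x))]
  -- monotone decreasing: `exp (-L x) * E x`
  have hanti : Monotone (fun x => -(exp (-L * x) * E x)) := by
    apply mono_of_ae_deriv_nonneg (hlip (-L)).neg'
    filter_upwards [hder (-L), hbd] with x hx hb
    refine ⟨_, ?_, hx.neg⟩
    rw [neg_nonneg]
    have hexp : (0:ℝ) ≤ exp (-L * x) := (exp_pos _).le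
    apply mul_nonpos_of_nonneg_of_nonpos hexp
    simp only [hE, hL]
    nlinarith [sq_nonneg (deriv φ x - φ x),
      mul_nonneg (sub_nonneg.2 hb.2) (sq_nonneg (deriv φ x)),
      mul_nonneg (sub_nonneg.2 hb.2) (sq_nonneg (φ x)),
      mul_nonneg (show (0:ℝ) ≤ V x + 1 by linarith [hb.1]) (sq_nonneg (deriv φ x - φ x))]
  rcases le_total 0 z with hz | hz
  · have := hmono hz
    simp only at this
    rw [hEz, mul_zero, mul_zero, exp_zero, one_mul] at this
    linarith
  · have := hanti hz
    simp only [neg_le_neg_iff] at this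
    rw [hEz, mul_zero, mul_zero, exp_zero, one_mul] at this
    linarith

/-! ### Tendsto contradictions -/

lemma tendsto_zero_contra {φ : ℝ → ℝ} (ht : Tendsto φ atTop (nhds 0)) {c M z : ℝ} (hc : 0 < c)
    (hbound : ∀ x, z ≤ x → M + c * (x - z) ≤ φ x) : False := by
  have h1 : ∀ᶠ x in atTop, φ x < 1 := ht.eventually (eventually_lt_nhds one_pos)
  obtain ⟨T, hT⟩ := eventually_atTop.1 h1
  set x := max T (max z (z + (1 - M) / c)) with hx
  have hxT : T ≤ x := le_max_left _ _
  have hxz : z ≤ x := le_trans (le_max_left _ _) (le_max_right _ _)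
  have hxM : z + (1 - M) / c ≤ x := le_trans (le_max_right _ _) (le_max_right _ _)
  have h2 : 1 - M ≤ c * (x - z) := by
    have h3 : (1 - M) / c ≤ x - z := by linarith
    calc 1 - M = c * ((1 - M) / c) := by field_simp
      _ ≤ c * (x - z) := by apply mul_le_mul_of_nonneg_left h3 hc.le
  have := hbound x hxz
  have := hT x hxT
  linarith

lemma tendsto_zero_contra' {φ : ℝ → ℝ} (ht : Tendsto φ atTop (nhds 0)) {c M z : ℝ} (hc : c < 0)
    (hbound : ∀ x, z ≤ x → φ x ≤ M + c * (x - z)) : False := by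
  apply tendsto_zero_contra (φ := fun x => -φ x) (c := -c) (M := -M) (z := z) _ (by linarith)
    (fun x hx => by have := hbound x hx; linarith)
  simpa using ht.neg

/-! ### Positivity of φ -/

lemma SolP.neg_escape {V φ : ℝ → ℝ} {v0 v1 : ℝ} (h0 : 0 < v0)
    (hbd : ∀ᵐ x : ℝ ∂volume, v0 ≤ V x ∧ V x ≤ v1) (hp : SolP V φ) {z : ℝ}
    (hz : φ z ≤ 0) (hz' : deriv φ z < 0) : False := by
  -- a right interval on which φ is negative
  obtain ⟨u, hu, hIoc⟩ : ∃ u, z < u ∧ ∀ t ∈ Ioc z u, φ t < 0 := by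
    rcases lt_or_eq_of_le hz with h | h
    · have hev : ∀ᶠ t in nhds z, φ t < 0 := (hp.cont.tendsto z).eventually (eventually_lt_nhds h)
      rcases Metric.eventually_nhds_iff.1 hev with ⟨δ, hδ, hball⟩
      refine ⟨z + δ/2, by linarith, fun t ht => hball ?_⟩
      rw [Real.dist_eq, abs_of_pos (by linarith [ht.1])]
      linarith [ht.2]
    · have hT : Tendsto (slope φ z) (𝓝[>] z) (nhds (deriv φ z)) :=
        ((hasDerivAt_iff_tendsto_slope).1 (hp.hasD z)).mono_left
          (nhdsWithin_mono _ fun t ht => ne_of_gt ht)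
      have hev : ∀ᶠ t in 𝓝[>] z, slope φ z t < 0 := hT (Iio_mem_nhds hz')
      obtain ⟨u, hu, hsub⟩ := (mem_nhdsGT_iff_exists_Ioc_subset).1 hev
      refine ⟨u, hu, fun t ht => ?_⟩
      have hs : slope φ z t < 0 := hsub ht
      rw [slope_def_field] at hs
      have htz : 0 < t - z := by linarith [ht.1]
      rcases div_neg_iff.1 hs with ⟨hnum, hden⟩ | ⟨hnum, hden⟩
      · linarith
      · linarith [h.symm ▸ hnum]
  -- key: derivative bounded by its value at z on an interval of negativity
  have hkey : ∀ b, z ≤ b → (∀ t ∈ Ioo z b, φ t < 0) → ∀ t ∈ Icc z b, deriv φ t ≤ deriv φ z := by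
    intro b hzb hneg t ht
    have haux := le_of_ae_deriv_nonneg_on (f := fun x => -(deriv φ x)) hp.2.1.neg'
      (a := z) (b := b) (x := z) (y := t) ?_ (le_refl z) ht.1 ht.2
    · linarith
    · filter_upwards [hp.2.2.1, hbd] with s hs hbs
      intro hsIoo
      refine ⟨-(V s * φ s), ?_, hs.neg⟩
      have h1 : V s * φ s ≤ 0 :=
        mul_nonpos_of_nonneg_of_nonpos (by linarith [hbs.1]) (hneg s hsIoo).le
      linarith
  -- φ stays negative on (z, ∞)
  have hstay : ∀ x, z < x → φ x < 0 := by
    by_contra hcon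
    push_neg at hcon
    obtain ⟨w0, hw0z, hw0⟩ := hcon
    set S := {x | z < x ∧ 0 ≤ φ x} with hS
    have hSne : S.Nonempty := ⟨w0, hw0z, hw0⟩
    have hSbdd : BddBelow S := ⟨z, fun s hs => hs.1.le⟩
    set w := sInf S with hw
    have hwlb : ∀ s ∈ S, w ≤ s := fun s hs => csInf_le hSbdd hs
    have hwu : u ≤ w := le_csInf hSne fun s hs => by
      by_contra hsu
      push_neg at hsu
      exact absurd hs.2 (not_le.2 (hIoc s ⟨hs.1, hsu.le⟩))
    have hwz : z < w := lt_of_lt_of_le hu hwu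
    have hφw : 0 ≤ φ w := by
      by_contra hneg
      push_neg at hneg
      have hev : ∀ᶠ t in nhds w, φ t < 0 := (hp.cont.tendsto w).eventually (eventually_lt_nhds hneg)
      rcases Metric.eventually_nhds_iff.1 hev with ⟨r, hr, hball⟩
      have : w + r ≤ w := le_csInf hSne fun s hs => by
        by_contra hlt
        push_neg at hlt
        have hd : dist s w < r := by
          rw [Real.dist_eq, abs_of_nonneg (by linarith [hwlb s hs])]
          linarith
        exact absurd hs.2 (not_le.2 (hball hd))
      linarith
    have hneg_on : ∀ t ∈ Ioo z w, φ t < 0 := fun t ht => by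
      by_contra hge
      push_neg at hge
      exact absurd (hwlb t ⟨ht.1, hge⟩) (not_le.2 ht.2)
    have := hp.linear_upper hwz.le (hkey w hwz.le hneg_on)
    nlinarith
  have hub : ∀ x, z ≤ x → φ x ≤ φ z + deriv φ z * (x - z) := by
    intro x hx
    exact hp.linear_upper hx (hkey x hx (fun t ht => hstay t ht.1))
  exact tendsto_zero_contra' hp.2.2.2.2 hz' hub

lemma SolP.pos {V φ : ℝ → ℝ} {v0 v1 : ℝ} (h0 : 0 < v0)
    (hbd : ∀ᵐ x : ℝ ∂volume, v0 ≤ V x ∧ V x ≤ v1) (hp : SolP V φ) (x : ℝ) : 0 < φ x := by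
  have hφ0 : φ 0 = 1 := hp.2.2.2.1
  -- part (a): positivity on [0, ∞)
  have hpos_right : ∀ t, 0 ≤ t → 0 < φ t := by
    by_contra hcon
    push_neg at hcon
    obtain ⟨t0, ht0, ht0'⟩ := hcon
    set S := {x | 0 ≤ x ∧ φ x ≤ 0} with hS
    have hSclosed : IsClosed S := by
      have : S = Ici 0 ∩ φ ⁻¹' (Iic 0) := by ext t; simp [hS]
      rw [this]
      exact isClosed_Ici.inter (isClosed_Iic.preimage hp.cont)
    have hSne : S.Nonempty := ⟨t0, ht0, ht0'⟩
    have hSbdd : BddBelow S := ⟨0, fun s hs => hs.1⟩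
    set z := sInf S with hz
    have hzS : z ∈ S := hSclosed.csInf_mem hSne hSbdd
    have hz0 : 0 < z := by
      rcases lt_or_eq_of_le hzS.1 with h | h
      · exact h
      · exfalso; have h2 := hzS.2; rw [← h, hφ0] at h2; linarith
    have hposI : ∀ t, 0 ≤ t → t < z → 0 < φ t := by
      intro t ht htz
      by_contra hge
      push_neg at hge
      exact absurd (csInf_le hSbdd ⟨ht, hge⟩) (not_le.2 htz)
    have hφz : φ z = 0 := by
      rcases lt_or_eq_of_le hzS.2 with h | h
      · exfalso
        have hev : ∀ᶠ t in nhds z, φ t < 0 := (hp.cont.tendsto z).eventually (eventually_lt_nhds h)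
        rcases Metric.eventually_nhds_iff.1 hev with ⟨r, hr, hball⟩
        set t := max 0 (z - r/2) with htdef
        have ht0 : 0 ≤ t := le_max_left _ _
        have htz : t < z := max_lt hz0 (by linarith)
        have htd : dist t z < r := by
          rw [Real.dist_eq, abs_of_nonpos (by linarith)]
          have : z - r/2 ≤ t := le_max_right _ _
          linarith
        exact absurd (hball htd) (not_lt.2 (hposI t ht0 htz).le)
      · exact h
    have hdz : deriv φ z ≠ 0 := fun hd => hp.nonvanish h0 hbd z ⟨hφz, hd⟩
    rcases lt_or_gt_of_ne hdz with hneg | hpos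
    · exact hp.neg_escape h0 hbd (le_of_eq hφz) hneg
    · -- left slopes are nonpositive, contradicting positive derivative
      have hT : Tendsto (slope φ z) (𝓝[<] z) (nhds (deriv φ z)) :=
        ((hasDerivAt_iff_tendsto_slope).1 (hp.hasD z)).mono_left
          (nhdsWithin_mono _ fun t ht => ne_of_lt ht)
      have hev : ∀ᶠ t in 𝓝[<] z, slope φ z t ≤ 0 := by
        have hmem : Ioo (max 0 (z - 1)) z ∈ 𝓝[<] z :=
          Ioo_mem_nhdsLT_of_mem ⟨max_lt hz0 (by linarith), le_refl z⟩
        filter_upwards [hmem] with t ht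
        rw [slope_def_field, hφz]
        apply div_nonpos_of_nonneg_of_nonpos
        · have := hposI t (le_trans (le_max_left 0 (z-1)) ht.1.le) ht.2
          linarith
        · linarith [ht.2]
      have := le_of_tendsto hT hev
      linarith
  -- part (b): positivity everywhere
  by_contra hcon
  push_neg at hcon
  have hxneg : x < 0 := by
    rcases lt_or_ge x 0 with h | h
    · exact h
    · exact absurd (hpos_right x h) (not_lt.2 hcon)
  set S := {t | t ≤ 0 ∧ φ t ≤ 0} with hS
  have hSclosed : IsClosed S := by
    have : S = Iic 0 ∩ φ ⁻¹' (Iic 0) := by ext t; simp [hS]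
    rw [this]
    exact isClosed_Iic.inter (isClosed_Iic.preimage hp.cont)
  have hSne : S.Nonempty := ⟨x, hxneg.le, hcon⟩
  have hSbdd : BddAbove S := ⟨0, fun s hs => hs.1⟩
  set z := sSup S with hz
  have hzS : z ∈ S := hSclosed.csSup_mem hSne hSbdd
  have hz0 : z < 0 := by
    rcases lt_or_eq_of_le hzS.1 with h | h
    · exact h
    · exfalso; have h2 := hzS.2; rw [h, hφ0] at h2; linarith
  have hposI : ∀ t, z < t → 0 < φ t := by
    intro t ht
    rcases le_or_gt t 0 with h | h
    · by_contra hge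
      push_neg at hge
      exact absurd (le_csSup hSbdd ⟨h, hge⟩) (not_le.2 ht)
    · exact hpos_right t h.le
  have hφz : φ z = 0 := by
    rcases lt_or_eq_of_le hzS.2 with h | h
    · exfalso
      have hev : ∀ᶠ t in nhds z, φ t < 0 := (hp.cont.tendsto z).eventually (eventually_lt_nhds h)
      rcases Metric.eventually_nhds_iff.1 hev with ⟨r, hr, hball⟩
      set t := min 0 (z + r/2) with htdef
      have htz : z < t := lt_min hz0 (by linarith)
      have htd : dist t z < r := by
        rw [Real.dist_eq, abs_of_nonneg (by linarith)]
        have : t ≤ z + r/2 := min_le_right _ _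
        linarith
      exact absurd (hball htd) (not_lt.2 (hposI t htz).le)
    · exact h
  have hdz : deriv φ z ≠ 0 := fun hd => hp.nonvanish h0 hbd z ⟨hφz, hd⟩
  have hdzpos : 0 < deriv φ z := by
    rcases lt_or_gt_of_ne hdz with hneg | hpos
    · exact (hp.neg_escape h0 hbd (le_of_eq hφz) hneg).elim
    · exact hpos
  -- derivative is at least deriv φ z on [z, ∞)
  have hderge : ∀ b, z ≤ b → ∀ t ∈ Icc z b, deriv φ z ≤ deriv φ t := by
    intro b hzb t ht
    apply le_of_ae_deriv_nonneg_on (f := deriv φ) hp.2.1 (a := z) (b := b) ?_ (le_refl z) ht.1 ht.2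
    filter_upwards [hp.2.2.1, hbd] with s hs hbs
    intro hsIoo
    exact ⟨V s * φ s, mul_nonneg (by linarith [hbs.1]) (hposI s hsIoo.1).le, hs⟩
  have hlb : ∀ b, z ≤ b → φ z + deriv φ z * (b - z) ≤ φ b :=
    fun b hzb => hp.linear_lower hzb (hderge b hzb)
  rw [hφz] at hlb
  exact tendsto_zero_contra (M := 0) (z := z) hp.2.2.2.2 hdzpos
    (fun b hb => by linarith [hlb b hb])

/-! ### Sign of the derivative and exponential bounds -/

lemma SolP.dmono {V φ : ℝ → ℝ} {v0 v1 : ℝ} (h0 : 0 < v0)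
    (hbd : ∀ᵐ x : ℝ ∂volume, v0 ≤ V x ∧ V x ≤ v1) (hp : SolP V φ) :
    Monotone (deriv φ) := by
  apply mono_of_ae_deriv_nonneg hp.2.1
  filter_upwards [hp.2.2.1, hbd] with s hs hbs
  exact ⟨V s * φ s, mul_nonneg (by linarith [hbs.1]) (hp.pos h0 hbd s).le, hs⟩

lemma SolP.dneg {V φ : ℝ → ℝ} {v0 v1 : ℝ} (h0 : 0 < v0)
    (hbd : ∀ᵐ x : ℝ ∂volume, v0 ≤ V x ∧ V x ≤ v1) (hp : SolP V φ) (x0 : ℝ) :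
    deriv φ x0 < 0 := by
  by_contra hcon
  push_neg at hcon
  obtain ⟨t0, ht0Icc, hmin⟩ := isCompact_Icc.exists_isMinOn
    (nonempty_Icc.2 (by linarith : x0 ≤ x0 + 1)) (hp.cont.continuousOn)
  set c : ℝ := v0 * φ t0 with hc
  have hcpos : 0 < c := mul_pos h0 (hp.pos h0 hbd t0)
  have hlip2 : LocallyLipschitz (fun x => deriv φ x - c * x) := by
    have hg : ContDiff ℝ 1 (fun p : ℝ × ℝ × ℝ => p.2.2 - c * p.1) := by fun_prop
    exact locallyLipschitz_comp3 hg hp.locLip hp.2.1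
  have hstep : deriv φ x0 - c * x0 ≤ deriv φ (x0 + 1) - c * (x0 + 1) := by
    apply le_of_ae_deriv_nonneg_on hlip2 (a := x0) (b := x0 + 1) ?_
      (le_refl x0) (by linarith) (le_refl _)
    filter_upwards [hp.2.2.1, hbd] with s hs hbs
    intro hsIoo
    refine ⟨V s * φ s - c, ?_, hs.sub (by simpa using (hasDerivAt_id s).const_mul c)⟩
    have h1 : φ t0 ≤ φ s := isMinOn_iff.1 hmin s ⟨hsIoo.1.le, hsIoo.2.le⟩
    have h2 : 0 < φ s := hp.pos h0 hbd s
    nlinarith [hbs.1]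
  have hge : ∀ t, x0 + 1 ≤ t → c ≤ deriv φ t := by
    intro t ht
    have := hp.dmono h0 hbd ht
    linarith
  have hlb : ∀ b, x0 + 1 ≤ b → φ (x0 + 1) + c * (b - (x0 + 1)) ≤ φ b := by
    intro b hb
    exact hp.linear_lower hb (fun t ht => hge t ht.1)
  exact tendsto_zero_contra hp.2.2.2.2 hcpos hlb

lemma SolP.sum_nonpos {V φ : ℝ → ℝ} {v0 v1 : ℝ} (h0 : 0 < v0)
    (hbd : ∀ᵐ x : ℝ ∂volume, v0 ≤ V x ∧ V x ≤ v1) (hp : SolP V φ) (x0 : ℝ) :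
    deriv φ x0 + Real.sqrt v0 * φ x0 ≤ 0 := by
  set ω := Real.sqrt v0 with hω
  have hωpos : 0 < ω := Real.sqrt_pos.2 h0
  have hω2 : ω ^ 2 = v0 := Real.sq_sqrt h0.le
  set G : ℝ → ℝ := fun x => exp (-ω * x) * (deriv φ x + ω * φ x) with hG
  have hGlip : LocallyLipschitz G := by
    have hg : ContDiff ℝ 1 (fun p : ℝ × ℝ × ℝ => exp (-ω * p.1) * (p.2.2 + ω * p.2.1)) := by
      fun_prop
    exact locallyLipschitz_comp3 hg hp.locLip hp.2.1
  have hGmono : Monotone G := by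
    apply mono_of_ae_deriv_nonneg hGlip
    filter_upwards [hp.2.2.1, hbd] with s hs hbs
    refine ⟨exp (-ω * s) * ((V s - v0) * φ s), ?_, ?_⟩
    · exact mul_nonneg (exp_pos _).le
        (mul_nonneg (by linarith [hbs.1]) (hp.pos h0 hbd s).le)
    · have h1 : HasDerivAt (fun y => exp (-ω * y)) (exp (-ω * s) * (-ω)) s := by
        simpa using ((hasDerivAt_id s).const_mul (-ω)).exp
      have h2 : HasDerivAt (fun y => deriv φ y + ω * φ y)
          (V s * φ s + ω * deriv φ s) s := hs.add ((hp.hasD s).const_mul ω)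
      have := h1.fun_mul h2
      refine this.congr_deriv ?_
      rw [← hω2]
      ring
  by_contra hcon
  push_neg at hcon
  have hGx0 : 0 < G x0 := mul_pos (exp_pos _) hcon
  have hrepr : ∀ x, deriv φ x + ω * φ x = exp (ω * x) * G x := by
    intro x
    rw [hG]
    simp only
    rw [← mul_assoc, ← exp_add]
    have : ω * x + -ω * x = 0 := by ring
    rw [this, exp_zero, one_mul]
  have hge : ∀ x, x0 ≤ x → deriv φ x0 + ω * φ x0 ≤ deriv φ x + ω * φ x := by
    intro x hx
    rw [hrepr x, hrepr x0]
    have h1 : G x0 ≤ G x := hGmono hx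
    have h2 : exp (ω * x0) ≤ exp (ω * x) := exp_le_exp.2 (by nlinarith)
    nlinarith [exp_pos (ω * x0), exp_pos (ω * x)]
  have htend : Tendsto (fun x => ω * φ x) atTop (nhds 0) := by
    simpa using hp.2.2.2.2.const_mul ω
  have hev : ∀ᶠ x in atTop, ω * φ x < deriv φ x0 + ω * φ x0 := by
    apply htend.eventually (eventually_lt_nhds (by linarith))
  obtain ⟨T, hT⟩ := eventually_atTop.1 hev
  set x := max T x0 with hxdef
  have h1 := hT x (le_max_left _ _)
  have h2 := hge x (le_max_right _ _)
  have h3 := hp.dneg h0 hbd x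
  linarith

lemma SolP.exp_anti {V φ : ℝ → ℝ} {v0 v1 : ℝ} (h0 : 0 < v0)
    (hbd : ∀ᵐ x : ℝ ∂volume, v0 ≤ V x ∧ V x ≤ v1) (hp : SolP V φ) :
    Antitone (fun x => exp (Real.sqrt v0 * x) * φ x) := by
  set ω := Real.sqrt v0 with hω
  have hD : ∀ x, HasDerivAt (fun y => exp (ω * y) * φ y)
      (exp (ω * x) * (deriv φ x + ω * φ x)) x := by
    intro x
    have h1 : HasDerivAt (fun y => exp (ω * y)) (exp (ω * x) * ω) x := by
      simpa using ((hasDerivAt_id x).const_mul ω).exp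
    have := h1.fun_mul (hp.hasD x)
    refine this.congr_deriv ?_
    ring
  apply antitone_of_deriv_nonpos (fun x => (hD x).differentiableAt)
  intro x
  rw [(hD x).deriv]
  exact mul_nonpos_of_nonneg_of_nonpos (exp_pos _).le (hp.sum_nonpos h0 hbd x)

lemma SolP.lower {V φ : ℝ → ℝ} {v0 v1 : ℝ} (h0 : 0 < v0)
    (hbd : ∀ᵐ x : ℝ ∂volume, v0 ≤ V x ∧ V x ≤ v1) (hp : SolP V φ) {x : ℝ} (hx : x ≤ 0) :
    exp (-(Real.sqrt v0 * x)) ≤ φ x := by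
  set ω := Real.sqrt v0 with hω
  have h1 : exp (ω * 0) * φ 0 ≤ exp (ω * x) * φ x := hp.exp_anti h0 hbd hx
  rw [mul_zero, exp_zero, one_mul, hp.2.2.2.1] at h1
  calc exp (-(ω * x)) = exp (-(ω * x)) * 1 := (mul_one _).symm
    _ ≤ exp (-(ω * x)) * (exp (ω * x) * φ x) :=
        mul_le_mul_of_nonneg_left h1 (exp_pos _).le
    _ = φ x := by rw [← mul_assoc, ← exp_add, neg_add_cancel, exp_zero, one_mul]

lemma SolP.upper {V φ : ℝ → ℝ} {v0 v1 : ℝ} (h0 : 0 < v0)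
    (hbd : ∀ᵐ x : ℝ ∂volume, v0 ≤ V x ∧ V x ≤ v1) (hp : SolP V φ) {x : ℝ} (hx : 0 ≤ x) :
    φ x ≤ exp (-(Real.sqrt v0 * x)) := by
  set ω := Real.sqrt v0 with hω
  have h1 : exp (ω * x) * φ x ≤ exp (ω * 0) * φ 0 := hp.exp_anti h0 hbd hx
  rw [mul_zero, exp_zero, one_mul, hp.2.2.2.1] at h1
  calc φ x = exp (-(ω * x)) * (exp (ω * x) * φ x) := by
        rw [← mul_assoc, ← exp_add, neg_add_cancel, exp_zero, one_mul]
    _ ≤ exp (-(ω * x)) * 1 := mul_le_mul_of_nonneg_left h1 (exp_pos _).le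
    _ = exp (-(ω * x)) := mul_one _

/-! ### Integrability of `φ⁻²` -/

lemma integrableOn_exp_mul_Iic' {c : ℝ} (hc : 0 < c) (b : ℝ) :
    IntegrableOn (fun x => exp (c * x)) (Iic b) volume := by
  have hD : ∀ x : ℝ, HasDerivAt (fun y => exp (c * y) / c) (exp (c * x)) x := by
    intro x
    have h1 : HasDerivAt (fun y => exp (c * y)) (exp (c * x) * c) x := by
      simpa using ((hasDerivAt_id x).const_mul c).exp
    have := h1.div_const c
    refine this.congr_deriv ?_
    field_simp
  have hce : Continuous (fun x : ℝ => exp (c * x)) := by fun_prop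
  refine integrableOn_Iic_of_intervalIntegral_norm_bounded (exp (c * b) / c) b
    (fun y => hce.integrableOn_Ioc) tendsto_id (Filter.Eventually.of_forall fun y => ?_)
  have hFTC : ∫ x in y..b, exp (c * x) = exp (c * b) / c - exp (c * y) / c :=
    intervalIntegral.integral_eq_sub_of_hasDerivAt (fun x _ => hD x)
      (hce.intervalIntegrable _ _)
  have hnn : (fun x => ‖exp (c * x)‖) = (fun x => exp (c * x)) :=
    funext fun x => norm_of_nonneg (exp_pos _).le
  rw [hnn]
  simp only [id_eq]
  rw [hFTC]
  have := exp_pos (c * y)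
  have := div_pos (exp_pos (c * y)) hc
  linarith

lemma SolP.integrable_inv_sq {V φ : ℝ → ℝ} {v0 v1 : ℝ} (h0 : 0 < v0)
    (hbd : ∀ᵐ x : ℝ ∂volume, v0 ≤ V x ∧ V x ≤ v1) (hp : SolP V φ) (x : ℝ) :
    IntegrableOn (fun ξ => (φ ξ ^ 2)⁻¹) (Iic x) volume := by
  set ω := Real.sqrt v0 with hω
  have hωpos : 0 < ω := Real.sqrt_pos.2 h0
  have hcont : Continuous (fun ξ => (φ ξ ^ 2)⁻¹) := by
    apply Continuous.inv₀ (hp.cont.pow 2)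
    intro ξ
    exact pow_ne_zero 2 (ne_of_gt (hp.pos h0 hbd ξ))
  have h1 : IntegrableOn (fun ξ => (φ ξ ^ 2)⁻¹) (Iic 0) volume := by
    apply Integrable.mono (integrableOn_exp_mul_Iic' (by linarith : (0:ℝ) < 2 * ω) 0)
      hcont.aestronglyMeasurable.restrict
    filter_upwards [ae_restrict_mem measurableSet_Iic] with ξ hξ
    have hl : exp (-(ω * ξ)) ≤ φ ξ := hp.lower h0 hbd hξ
    have hπ : 0 < φ ξ := hp.pos h0 hbd ξ
    have h2 : exp (-(ω * ξ)) ^ 2 ≤ φ ξ ^ 2 := by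
      apply pow_le_pow_left₀ (exp_pos _).le hl 2
    have h3 : (φ ξ ^ 2)⁻¹ ≤ (exp (-(ω * ξ)) ^ 2)⁻¹ := by
      apply inv_anti₀ (by positivity) h2
    have h4 : (exp (-(ω * ξ)) ^ 2)⁻¹ = exp (2 * ω * ξ) := by
      rw [← exp_nat_mul, ← exp_neg]
      ring_nf
    rw [norm_of_nonneg (by positivity), norm_of_nonneg (exp_pos _).le]
    rw [h4] at h3
    exact h3
  rcases le_or_gt x 0 with hx | hx
  · exact h1.mono_set (Iic_subset_Iic.2 hx)
  · have h2 : IntegrableOn (fun ξ => (φ ξ ^ 2)⁻¹) (Icc 0 x) volume :=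
      hcont.integrableOn_Icc
    apply (h1.union h2).mono_set
    intro ξ hξ
    rcases le_or_gt ξ 0 with h | h
    · exact Or.inl h
    · exact Or.inr ⟨h.le, hξ⟩

/-! ### Reflection: `SolM` facts from `SolP` -/


lemma ae_comp_neg {p : ℝ → Prop} (h : ∀ᵐ y : ℝ ∂(volume : Measure ℝ), p y) :
    ∀ᵐ x : ℝ ∂(volume : Measure ℝ), p (-x) := by
  have hemb : MeasurableEmbedding (fun x : ℝ => -x) :=
    (Homeomorph.neg ℝ).isClosedEmbedding.measurableEmbedding
  rw [ae_iff] at h ⊢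
  have heq : {x : ℝ | ¬ p (-x)} = (fun x : ℝ => -x) ⁻¹' {y | ¬ p y} := rfl
  rw [heq, ← hemb.map_apply]
  have : Measure.map (fun x : ℝ => -x) volume = volume := Measure.map_neg_eq_self volume
  rw [this]
  exact h

lemma derivCompNegAux (φ : ℝ → ℝ) (hdiff : ∀ x, DifferentiableAt ℝ φ x) :
    deriv (fun y => φ (-y)) = fun x => -deriv φ (-x) := by
  funext x
  have h := ((hdiff (-x)).hasDerivAt.comp x (hasDerivAt_neg x))
  simpa [Function.comp_def] using h.deriv

lemma SolM.reflect {V φ : ℝ → ℝ} (hm : SolM V φ) :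
    SolP (fun x => V (-x)) (fun x => φ (-x)) := by
  have hdiff : ∀ x : ℝ, DifferentiableAt ℝ (fun y => φ (-y)) x := fun x =>
    ((hm.1 (-x)).hasDerivAt.comp x (hasDerivAt_neg x)).differentiableAt
  have heq : deriv (fun y => φ (-y)) = fun x => -deriv φ (-x) := derivCompNegAux φ hm.1
  refine ⟨hdiff, ?_, ?_, by simpa using hm.2.2.2.1, ?_⟩
  · rw [heq]
    have hneglip : LocallyLipschitz (fun x : ℝ => -x) :=
      ((LipschitzWith.id (α := ℝ)).neg).locallyLipschitz
    exact (hm.2.1.comp hneglip).neg'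
  · filter_upwards [ae_comp_neg hm.2.2.1] with x hx
    rw [heq]
    have h1 := (hx.comp x (hasDerivAt_neg x)).fun_neg
    simpa [mul_comm] using h1
  · exact hm.2.2.2.2.comp tendsto_neg_atTop_atBot

lemma SolM.pos {V φ : ℝ → ℝ} {v0 v1 : ℝ} (h0 : 0 < v0)
    (hbd : ∀ᵐ x : ℝ ∂volume, v0 ≤ V x ∧ V x ≤ v1) (hm : SolM V φ) (x : ℝ) : 0 < φ x := by
  have := hm.reflect.pos h0 (ae_comp_neg hbd) (-x)
  simpa using this

lemma SolM.dpos {V φ : ℝ → ℝ} {v0 v1 : ℝ} (h0 : 0 < v0)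
    (hbd : ∀ᵐ x : ℝ ∂volume, v0 ≤ V x ∧ V x ≤ v1) (hm : SolM V φ) (x : ℝ) :
    0 < deriv φ x := by
  have h1 := hm.reflect.dneg h0 (ae_comp_neg hbd) (-x)
  rw [derivCompNegAux φ hm.1] at h1
  simp only [neg_neg] at h1
  linarith

lemma SolM.upper {V φ : ℝ → ℝ} {v0 v1 : ℝ} (h0 : 0 < v0)
    (hbd : ∀ᵐ x : ℝ ∂volume, v0 ≤ V x ∧ V x ≤ v1) (hm : SolM V φ) {x : ℝ} (hx : x ≤ 0) :
    φ x ≤ exp (Real.sqrt v0 * x) := by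
  have h1 := hm.reflect.upper h0 (ae_comp_neg hbd) (x := -x) (by linarith)
  simp only [neg_neg] at h1
  rw [show -(Real.sqrt v0 * -x) = Real.sqrt v0 * x by ring] at h1
  exact h1

lemma SolM.lower {V φ : ℝ → ℝ} {v0 v1 : ℝ} (h0 : 0 < v0)
    (hbd : ∀ᵐ x : ℝ ∂volume, v0 ≤ V x ∧ V x ≤ v1) (hm : SolM V φ) {x : ℝ} (hx : 0 ≤ x) :
    exp (Real.sqrt v0 * x) ≤ φ x := by
  have h1 := hm.reflect.lower h0 (ae_comp_neg hbd) (x := -x) (by linarith)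
  simp only [neg_neg] at h1
  rw [show -(Real.sqrt v0 * -x) = Real.sqrt v0 * x by ring] at h1
  exact h1

lemma integrableOn_Ici_comp_neg {f : ℝ → ℝ} {c : ℝ}
    (h : IntegrableOn f (Iic (-c)) volume) :
    IntegrableOn (fun x => f (-x)) (Ici c) volume := by
  have hemb : MeasurableEmbedding (fun x : ℝ => -x) :=
    (Homeomorph.neg ℝ).isClosedEmbedding.measurableEmbedding
  have hpre : (fun x : ℝ => -x) ⁻¹' (Iic (-c)) = Ici c := by
    ext t; simp [neg_le]
  have hmap : Measure.map (fun x : ℝ => -x) ((volume : Measure ℝ).restrict (Ici c)) =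
      (volume : Measure ℝ).restrict (Iic (-c)) := by
    have hr := Measure.restrict_map (measurable_neg : Measurable (fun x : ℝ => -x))
      (measurableSet_Iic (a := -c)) (μ := (volume : Measure ℝ))
    rw [hpre] at hr
    rw [← hr, Measure.map_neg_eq_self]
  have h2 : Integrable f (Measure.map (fun x : ℝ => -x) ((volume : Measure ℝ).restrict (Ici c))) := by
    rw [hmap]; exact h
  exact (hemb.integrable_map_iff).1 h2

lemma SolM.integrable_inv_sq {V φ : ℝ → ℝ} {v0 v1 : ℝ} (h0 : 0 < v0)
    (hbd : ∀ᵐ x : ℝ ∂volume, v0 ≤ V x ∧ V x ≤ v1) (hm : SolM V φ) (x : ℝ) :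
    IntegrableOn (fun ξ => (φ ξ ^ 2)⁻¹) (Ici x) volume := by
  have h1 := hm.reflect.integrable_inv_sq h0 (ae_comp_neg hbd) (-x)
  have h2 := integrableOn_Ici_comp_neg (c := x) (by simpa using h1)
  simpa [neg_neg] using h2

/-! ### LocallyLipschitz algebra -/

lemma LocallyLipschitz.mul' {f g : ℝ → ℝ} (hf : LocallyLipschitz f) (hg : LocallyLipschitz g) :
    LocallyLipschitz (fun x => f x * g x) := by
  have h : ContDiff ℝ 1 (fun p : ℝ × ℝ => p.1 * p.2) := by fun_prop
  exact h.locallyLipschitz.comp (hf.prodMk hg)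

lemma LocallyLipschitz.sub' {f g : ℝ → ℝ} (hf : LocallyLipschitz f) (hg : LocallyLipschitz g) :
    LocallyLipschitz (fun x => f x - g x) := by
  have h : ContDiff ℝ 1 (fun p : ℝ × ℝ => p.1 - p.2) := by fun_prop
  exact h.locallyLipschitz.comp (hf.prodMk hg)

/-! ### Main theorem -/

theorem stmt18' (V : ℝ → ℝ) (v0 v1 : ℝ) (h0 : 0 < v0)
    (hbd : ∀ᵐ x : ℝ ∂volume, v0 ≤ V x ∧ V x ≤ v1)
    (φp φm : ℝ → ℝ) (hp : SolP V φp) (hm : SolM V φm) :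
    0 < deriv φm 0 - deriv φp 0 ∧
    (∀ x : ℝ, φp x * deriv φm x - deriv φp x * φm x = deriv φm 0 - deriv φp 0) ∧
    (∀ x : ℝ, IntegrableOn (fun ξ => (φp ξ ^ 2)⁻¹) (Iic x) volume ∧
      IntegrableOn (fun ξ => (φm ξ ^ 2)⁻¹) (Ici x) volume) ∧
    (∀ x : ℝ, φm x = (deriv φm 0 - deriv φp 0) * φp x * ∫ ξ in Iic x, (φp ξ ^ 2)⁻¹) ∧
    (∀ x : ℝ, φp x = (deriv φm 0 - deriv φp 0) * φm x * ∫ ξ in Ici x, (φm ξ ^ 2)⁻¹) := by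
  set ω := Real.sqrt v0 with hω
  have hωpos : 0 < ω := Real.sqrt_pos.2 h0
  have hmcont : Continuous φm := continuous_iff_continuousAt.2 fun x => (hm.1 x).continuousAt
  have hmlocLip : LocallyLipschitz φm :=
    (contDiff_one_iff_deriv.2 ⟨fun x => hm.1 x, hm.2.1.continuous⟩).locallyLipschitz
  have hmD : ∀ x, HasDerivAt φm (deriv φm x) x := fun x => (hm.1 x).hasDerivAt
  have hppos : ∀ x, 0 < φp x := hp.pos h0 hbd
  have hmpos : ∀ x, 0 < φm x := hm.pos h0 hbd
  have hpdneg : ∀ x, deriv φp x < 0 := hp.dneg h0 hbd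
  have hmdpos : ∀ x, 0 < deriv φm x := hm.dpos h0 hbd
  set W : ℝ := deriv φm 0 - deriv φp 0 with hWdef
  have hWpos : 0 < W := by have := hpdneg 0; have := hmdpos 0; rw [hWdef]; linarith
  -- the Wronskian is constant
  set Wf : ℝ → ℝ := fun x => φp x * deriv φm x - deriv φp x * φm x with hWf
  have hWlip : LocallyLipschitz Wf :=
    (hp.locLip.mul' hm.2.1).sub' (hp.2.1.mul' hmlocLip)
  have hWconst : ∀ x, Wf x = Wf 0 := by
    have h := const_of_ae_deriv_zero hWlip ?_
    · exact fun x => h x 0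
    · filter_upwards [hp.2.2.1, hm.2.2.1] with x hxp hxm
      have h1 := (hp.hasD x).fun_mul hxm
      have h2 := hxp.fun_mul (hmD x)
      have h3 := h1.fun_sub h2
      refine h3.congr_deriv ?_
      ring
  have hWf0 : Wf 0 = W := by
    rw [hWf, hWdef]
    simp only [hp.2.2.2.1, hm.2.2.2.1]
    ring
  have hWfx : ∀ x, Wf x = W := fun x => (hWconst x).trans hWf0
  -- integrability
  have hIntP : ∀ x, IntegrableOn (fun ξ => (φp ξ ^ 2)⁻¹) (Iic x) volume :=
    hp.integrable_inv_sq h0 hbd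
  have hIntM : ∀ x, IntegrableOn (fun ξ => (φm ξ ^ 2)⁻¹) (Ici x) volume :=
    hm.integrable_inv_sq h0 hbd
  have hcontP : Continuous (fun ξ => (φp ξ ^ 2)⁻¹) :=
    Continuous.inv₀ (hp.cont.pow 2) (fun ξ => pow_ne_zero 2 (ne_of_gt (hppos ξ)))
  have hcontM : Continuous (fun ξ => (φm ξ ^ 2)⁻¹) :=
    Continuous.inv₀ (hmcont.pow 2) (fun ξ => pow_ne_zero 2 (ne_of_gt (hmpos ξ)))
  -- formula 1
  have hform1 : ∀ x : ℝ, φm x = W * φp x * ∫ ξ in Iic x, (φp ξ ^ 2)⁻¹ := by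
    intro x
    have hR : ∀ t : ℝ, HasDerivAt (fun y => φm y / φp y) (W * (φp t ^ 2)⁻¹) t := by
      intro t
      have hdiv := (hmD t).div (hp.hasD t) (ne_of_gt (hppos t))
      have hnum : deriv φm t * φp t - φm t * deriv φp t = W := by
        have := hWfx t
        rw [hWf] at this
        simp only at this
        linarith [this]
      have : (deriv φm t * φp t - φm t * deriv φp t) / φp t ^ 2 = W * (φp t ^ 2)⁻¹ := by
        rw [hnum, div_eq_mul_inv]
      rwa [this] at hdiv
    have hFTC : ∀ y : ℝ, W * ∫ t in y..x, (φp t ^ 2)⁻¹ = φm x / φp x - φm y / φp y := by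
      intro y
      rw [← intervalIntegral.integral_const_mul]
      exact intervalIntegral.integral_eq_sub_of_hasDerivAt (fun t _ => hR t)
        ((continuous_const.mul hcontP).intervalIntegrable _ _)
    have hTend1 : Tendsto (fun y => W * ∫ t in y..x, (φp t ^ 2)⁻¹) atBot
        (nhds (W * ∫ ξ in Iic x, (φp ξ ^ 2)⁻¹)) :=
      (intervalIntegral_tendsto_integral_Iic x (hIntP x) tendsto_id).const_mul W
    have hTend2 : Tendsto (fun y => φm y / φp y) atBot (nhds 0) := by
      apply tendsto_of_tendsto_of_tendsto_of_le_of_le' tendsto_const_nhds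
        (Tendsto.comp Real.tendsto_exp_atBot
          (Tendsto.const_mul_atBot (by linarith : (0:ℝ) < 2 * ω) tendsto_id))
      · exact Filter.Eventually.of_forall fun y =>
          div_nonneg (hmpos y).le (hppos y).le
      · filter_upwards [Iic_mem_atBot 0] with y (hy : y ≤ 0)
        have h1 : φm y / φp y ≤ exp (ω * y) / exp (-(ω * y)) :=
          div_le_div₀ (exp_pos _).le (hm.upper h0 hbd hy) (exp_pos _)
            (hp.lower h0 hbd hy)
        have h2 : exp (ω * y) / exp (-(ω * y)) = exp (2 * ω * (id y)) := by
          rw [← Real.exp_sub]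
          congr 1
          simp only [id_eq]
          ring
        rw [h2] at h1
        exact h1
    have hTend3 : Tendsto (fun y => φm x / φp x - φm y / φp y) atBot
        (nhds (φm x / φp x - 0)) := tendsto_const_nhds.sub hTend2
    have hTend1' : Tendsto (fun y => φm x / φp x - φm y / φp y) atBot
        (nhds (W * ∫ ξ in Iic x, (φp ξ ^ 2)⁻¹)) := hTend1.congr hFTC
    have heq := tendsto_nhds_unique hTend1' hTend3
    rw [sub_zero] at heq
    have hφpne : φp x ≠ 0 := ne_of_gt (hppos x)
    have hgoal : φm x = (W * ∫ ξ in Iic x, (φp ξ ^ 2)⁻¹) * φp x := by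
      rw [heq, div_mul_cancel₀ _ hφpne]
    rw [hgoal]
    ring
  -- formula 2
  have hform2 : ∀ x : ℝ, φp x = W * φm x * ∫ ξ in Ici x, (φm ξ ^ 2)⁻¹ := by
    intro x
    have hR : ∀ t : ℝ, HasDerivAt (fun y => φp y / φm y) (-(W * (φm t ^ 2)⁻¹)) t := by
      intro t
      have hdiv := (hp.hasD t).div (hmD t) (ne_of_gt (hmpos t))
      have hnum : deriv φp t * φm t - φp t * deriv φm t = -W := by
        have := hWfx t
        rw [hWf] at this
        simp only at this
        linarith [this]
      have : (deriv φp t * φm t - φp t * deriv φm t) / φm t ^ 2 = -(W * (φm t ^ 2)⁻¹) := by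
        rw [hnum]
        field_simp
      rwa [this] at hdiv
    have hFTC : ∀ y : ℝ, W * ∫ t in x..y, (φm t ^ 2)⁻¹ = φp x / φm x - φp y / φm y := by
      intro y
      have h1 : ∫ t in x..y, -(W * (φm t ^ 2)⁻¹) = φp y / φm y - φp x / φm x :=
        intervalIntegral.integral_eq_sub_of_hasDerivAt (fun t _ => hR t)
          (((continuous_const.mul hcontM).neg).intervalIntegrable _ _)
      rw [intervalIntegral.integral_neg, intervalIntegral.integral_const_mul] at h1
      linarith
    have hIoi : IntegrableOn (fun ξ => (φm ξ ^ 2)⁻¹) (Ioi x) volume :=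
      (hIntM x).mono_set Ioi_subset_Ici_self
    have hTend1 : Tendsto (fun y => W * ∫ t in x..y, (φm t ^ 2)⁻¹) atTop
        (nhds (W * ∫ ξ in Ioi x, (φm ξ ^ 2)⁻¹)) :=
      (intervalIntegral_tendsto_integral_Ioi x hIoi tendsto_id).const_mul W
    have hTend2 : Tendsto (fun y => φp y / φm y) atTop (nhds 0) := by
      apply tendsto_of_tendsto_of_tendsto_of_le_of_le' tendsto_const_nhds
        (Tendsto.comp Real.tendsto_exp_atBot
          (Tendsto.const_mul_atBot (by linarith : (0:ℝ) < 2 * ω)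
            tendsto_neg_atTop_atBot))
      · exact Filter.Eventually.of_forall fun y =>
          div_nonneg (hppos y).le (hmpos y).le
      · filter_upwards [Ici_mem_atTop 0] with y (hy : 0 ≤ y)
        have h1 : φp y / φm y ≤ exp (-(ω * y)) / exp (ω * y) :=
          div_le_div₀ (exp_pos _).le (hp.upper h0 hbd hy) (exp_pos _)
            (hm.lower h0 hbd hy)
        have h2 : exp (-(ω * y)) / exp (ω * y) = exp (2 * ω * (-y)) := by
          rw [← Real.exp_sub]
          congr 1
          ring
        rw [h2] at h1
        exact h1
    have hTend3 : Tendsto (fun y => φp x / φm x - φp y / φm y) atTop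
        (nhds (φp x / φm x - 0)) := tendsto_const_nhds.sub hTend2
    have hTend1' : Tendsto (fun y => φp x / φm x - φp y / φm y) atTop
        (nhds (W * ∫ ξ in Ioi x, (φm ξ ^ 2)⁻¹)) := hTend1.congr hFTC
    have heq := tendsto_nhds_unique hTend1' hTend3
    rw [sub_zero] at heq
    have hIcieq : ∫ ξ in Ici x, (φm ξ ^ 2)⁻¹ = ∫ ξ in Ioi x, (φm ξ ^ 2)⁻¹ :=
      integral_Ici_eq_integral_Ioi
    rw [hIcieq]
    have hφmne : φm x ≠ 0 := ne_of_gt (hmpos x)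
    have hgoal : φp x = (W * ∫ ξ in Ioi x, (φm ξ ^ 2)⁻¹) * φm x := by
      rw [heq, div_mul_cancel₀ _ hφmne]
    rw [hgoal]
    ring
  refine ⟨hWpos, ?_, fun x => ⟨hIntP x, hIntM x⟩, hform1, hform2⟩
  intro x
  have := hWfx x
  rw [hWf] at this
  simpa using this

/-- the Wronskian `φ₊φ₋' − φ₊'φ₋` is constant, equal to
`W = φ₋'(0) − φ₊'(0) > 0`, the integrals `H₊(x) = ∫_{−∞}^x φ₊⁻²`, `H₋(x) = ∫_x^∞ φ₋⁻²`
converge, and `φ₋ = W φ₊ H₊`, `φ₊ = W φ₋ H₋` on ℝ. -/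
theorem stmt18 (V : ℝ → ℝ) (v0 v1 : ℝ) (hmeas : Measurable V) (h0 : 0 < v0)
    (hbd : ∀ᵐ x : ℝ ∂volume, v0 ≤ V x ∧ V x ≤ v1)
    (φp φm : ℝ → ℝ) (hp : SolP V φp) (hm : SolM V φm) :
    0 < deriv φm 0 - deriv φp 0 ∧
    (∀ x : ℝ, φp x * deriv φm x - deriv φp x * φm x = deriv φm 0 - deriv φp 0) ∧
    (∀ x : ℝ, IntegrableOn (fun ξ => (φp ξ ^ 2)⁻¹) (Iic x) volume ∧
      IntegrableOn (fun ξ => (φm ξ ^ 2)⁻¹) (Ici x) volume) ∧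
    (∀ x : ℝ, φm x = (deriv φm 0 - deriv φp 0) * φp x * ∫ ξ in Iic x, (φp ξ ^ 2)⁻¹) ∧
    (∀ x : ℝ, φp x = (deriv φm 0 - deriv φp 0) * φm x * ∫ ξ in Ici x, (φm ξ ^ 2)⁻¹) := by
  exact stmt18' V v0 v1 h0 hbd φp φm hp hm
end
end
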